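/- arXiv:1201.3026 — 7 statements merged into one kernel-verified Lean document; each statement's English description precedes it below -/
import Mathlib

section
/- Let H be a complex Hilbert space, H₁ and H₂ closed subspaces of H, and P₁, P₂ the orthogonal projections onto H₁ and H₂. Then the sum H₁ + H₂ is closed in H if and only if ‖P₁P₂ − P_{H₁∩H₂}‖ < 1, where P_{H₁∩H₂} is the orthogonal projection onto the closed subspace H₁ ∩ H₂. -/
/-- The orthogonal projection of a Hilbert space `H` onto a complete (closed) subspace `K`,
viewed as a continuous linear operator `H →L[ℂ] H`. -/
noncomputable def proj {H : Type*} [NormedAddCommGroup H] [InnerProductSpace ℂ H]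
    (K : Submodule ℂ H) [CompleteSpace K] : H →L[ℂ] H :=
  K.subtypeL.comp (K.orthogonalProjection)

open scoped InnerProductSpace

set_option maxHeartbeats 1000000

section helpers

variable {H : Type*} [NormedAddCommGroup H] [InnerProductSpace ℂ H]

lemma proj_apply (K : Submodule ℂ H) [CompleteSpace K] (z : H) :
    proj K z = (K.orthogonalProjection z : H) := rfl

lemma proj_mem (K : Submodule ℂ H) [CompleteSpace K] (z : H) : proj K z ∈ K :=
  (K.orthogonalProjection z).2

lemma proj_eq_self (K : Submodule ℂ H) [CompleteSpace K] {v : H} (hv : v ∈ K) :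
    proj K v = v := by
  rw [proj_apply]; exact K.starProjection_eq_self_iff.2 hv

lemma inner_proj_left (K : Submodule ℂ H) [CompleteSpace K] (u v : H) :
    ⟪proj K u, v⟫_ℂ = ⟪u, proj K v⟫_ℂ :=
  K.inner_starProjection_left_eq_right u v

lemma proj_eq_zero (K : Submodule ℂ H) [CompleteSpace K] {v : H} (hv : v ∈ Kᗮ) :
    proj K v = 0 := by
  rw [proj_apply, Submodule.orthogonalProjectionOnto_apply_of_mem_orthogonal hv,
    Submodule.coe_zero]

lemma norm_proj_le (K : Submodule ℂ H) [CompleteSpace K] (z : H) : ‖proj K z‖ ≤ ‖z‖ := by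
  rw [proj_apply]
  calc ‖(K.orthogonalProjection z : H)‖ = ‖K.orthogonalProjection z‖ := rfl
    _ ≤ ‖K.orthogonalProjection‖ * ‖z‖ := (K.orthogonalProjection).le_opNorm z
    _ ≤ 1 * ‖z‖ := by
        have : ‖K.orthogonalProjection‖ ≤ 1 := Submodule.orthogonalProjectionOnto_norm_le K
        have := norm_nonneg z
        nlinarith
    _ = ‖z‖ := one_mul _

lemma norm_sub_proj_le (K : Submodule ℂ H) [CompleteSpace K] (z : H) :
    ‖z - proj K z‖ ≤ ‖z‖ := by
  have horth : z - proj K z ∈ Kᗮ := Submodule.sub_starProjection_mem_orthogonal (K := K) z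
  have h0 : ⟪proj K z, z - proj K z⟫_ℂ = 0 :=
    (Submodule.mem_orthogonal K _).1 horth _ (proj_mem K z)
  have hz : z = proj K z + (z - proj K z) := by abel
  have hsq : ‖z‖ ^ 2 = ‖proj K z‖ ^ 2 + 2 * RCLike.re (⟪proj K z, z - proj K z⟫_ℂ)
      + ‖z - proj K z‖ ^ 2 := by
    conv_lhs => rw [hz]
    exact norm_add_sq _ _
  rw [h0] at hsq
  simp only [map_zero] at hsq
  have h1 : ‖z - proj K z‖ ^ 2 ≤ ‖z‖ ^ 2 := by nlinarith [sq_nonneg ‖proj K z‖]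
  nlinarith [norm_nonneg (z - proj K z), norm_nonneg z]

variable [CompleteSpace H]

/-- If two closed subspaces have "angle" bounded away from 1, their sum is closed. -/
lemma sup_isClosed (A B : Submodule ℂ H) (hA : IsClosed (A : Set H))
    (hB : IsClosed (B : Set H)) {c : ℝ} (hc0 : 0 ≤ c) (hc1 : c < 1)
    (hang : ∀ x ∈ A, ∀ y ∈ B, ‖⟪x, y⟫_ℂ‖ ≤ c * (‖x‖ * ‖y‖)) :
    IsClosed ((A ⊔ B : Submodule ℂ H) : Set H) := by
  haveI : CompleteSpace A := hA.completeSpace_coe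
  haveI : CompleteSpace B := hB.completeSpace_coe
  set φ : (A × B) →L[ℂ] H :=
    A.subtypeL.comp (ContinuousLinearMap.fst ℂ A B) +
      B.subtypeL.comp (ContinuousLinearMap.snd ℂ A B) with hφdef
  have hφ : ∀ p : A × B, φ p = (p.1 : H) + (p.2 : H) := fun p => rfl
  -- key norm estimate
  have key : ∀ x ∈ A, ∀ y ∈ B, (1 - c) * (max ‖x‖ ‖y‖) ^ 2 ≤ ‖x + y‖ ^ 2 := by
    intro x hx y hy
    have h1 : ‖x + y‖ ^ 2 = ‖x‖ ^ 2 + 2 * RCLike.re (⟪x, y⟫_ℂ) + ‖y‖ ^ 2 :=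
      norm_add_sq _ _
    have h2 : -‖⟪x, y⟫_ℂ‖ ≤ RCLike.re (⟪x, y⟫_ℂ) :=
      (abs_le.1 (RCLike.abs_re_le_norm _)).1
    have h3 : ‖⟪x, y⟫_ℂ‖ ≤ c * (‖x‖ * ‖y‖) := hang x hx y hy
    rcases max_choice ‖x‖ ‖y‖ with hm | hm <;> rw [hm] <;>
      nlinarith [norm_nonneg x, norm_nonneg y, sq_nonneg (‖x‖ - ‖y‖)]
  -- antilipschitz constant
  set s : ℝ := Real.sqrt (1 - c) with hs
  have hs0 : 0 < s := Real.sqrt_pos.2 (by linarith)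
  have hs2 : s ^ 2 = 1 - c := Real.sq_sqrt (by linarith)
  have anti : AntilipschitzWith (Real.toNNReal s⁻¹) φ := by
    apply φ.antilipschitz_of_bound
    intro p
    have hp : ‖p‖ = max ‖(p.1 : H)‖ ‖(p.2 : H)‖ := rfl
    have hk := key (p.1 : H) p.1.2 (p.2 : H) p.2.2
    rw [← hφ p] at hk
    have hmax0 : 0 ≤ max ‖(p.1 : H)‖ ‖(p.2 : H)‖ := le_max_of_le_left (norm_nonneg _)
    have hle : s * max ‖(p.1 : H)‖ ‖(p.2 : H)‖ ≤ ‖φ p‖ := by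
      have h1 : (s * max ‖(p.1 : H)‖ ‖(p.2 : H)‖) ^ 2 ≤ ‖φ p‖ ^ 2 := by
        rw [mul_pow, hs2]; exact hk
      have := Real.sqrt_le_sqrt h1
      rwa [Real.sqrt_sq (by positivity), Real.sqrt_sq (norm_nonneg _)] at this
    rw [hp, Real.coe_toNNReal _ (by positivity), inv_mul_eq_div, le_div_iff₀ hs0]
    linarith [hle]
  have hrange : Set.range φ = ((A ⊔ B : Submodule ℂ H) : Set H) := by
    ext z
    constructor
    · rintro ⟨p, rfl⟩
      rw [hφ]
      exact Submodule.add_mem_sup p.1.2 p.2.2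
    · intro hz
      rcases Submodule.mem_sup.1 hz with ⟨x, hx, y, hy, rfl⟩
      exact ⟨(⟨x, hx⟩, ⟨y, hy⟩), rfl⟩
  rw [← hrange]
  exact anti.isClosed_range φ.uniformContinuous

end helpers


/-- From a lower bound for sums, deduce an angle bound on inner products. -/
lemma norm_inner_le_of_bound {H : Type*} [NormedAddCommGroup H] [InnerProductSpace ℂ H]
    (A B : Submodule ℂ H) {C : ℝ} (hC1 : 1 ≤ C)
    (hbound : ∀ x ∈ A, ∀ y ∈ B, max ‖x‖ ‖y‖ ≤ C * ‖x + y‖) :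
    ∀ x ∈ A, ∀ y ∈ B, ‖⟪x, y⟫_ℂ‖ ≤ (1 - 1/(2*C^2)) * (‖x‖ * ‖y‖) := by
  have hC0 : (0:ℝ) < C := lt_of_lt_of_le one_pos hC1
  intro x hx y hy
  by_cases ht : ⟪x, y⟫_ℂ = 0
  · rw [ht, norm_zero]
    have h2 : (2:ℝ) ≤ 2*C^2 := by nlinarith
    have h1 : 1/(2*C^2) ≤ 1/2 := by
      rw [div_le_div_iff₀ (by positivity) (by norm_num)]
      linarith
    exact mul_nonneg (by linarith) (by positivity)
  have hx0 : x ≠ 0 := by rintro rfl; simp at ht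
  have hy0 : y ≠ 0 := by rintro rfl; simp at ht
  have ha : (0:ℝ) < ‖x‖ := norm_pos_iff.2 hx0
  have hb : (0:ℝ) < ‖y‖ := norm_pos_iff.2 hy0
  have hτ : (0:ℝ) < ‖⟪x, y⟫_ℂ‖ := norm_pos_iff.2 ht
  set a : ℝ := ‖x‖
  set b : ℝ := ‖y‖
  set t : ℂ := ⟪x, y⟫_ℂ with htdef
  set τ : ℝ := ‖t‖ with hτdef
  set μ : ℂ := (-(τ:ℂ)/t) * ((a/b : ℝ) : ℂ) with hμdef
  have hμnorm : ‖μ‖ = a/b := by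
    rw [hμdef, norm_mul, norm_div, norm_neg, Complex.norm_real, Complex.norm_real]
    rw [Real.norm_eq_abs, Real.norm_eq_abs, abs_of_pos hτ,
      abs_of_pos (div_pos ha hb), ← hτdef, div_self hτ.ne', one_mul]
  set y' : H := μ • y with hy'def
  have hy'B : y' ∈ B := Submodule.smul_mem _ _ hy
  have hny' : ‖y'‖ = a := by
    rw [hy'def, norm_smul, hμnorm]
    field_simp; rfl
  have hinner : ⟪x, y'⟫_ℂ = ((-(τ*(a/b)) : ℝ) : ℂ) := by
    rw [hy'def, inner_smul_right, ← htdef, hμdef]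
    field_simp
    push_cast; ring
  have hre : RCLike.re ⟪x, y'⟫_ℂ = -(τ*(a/b)) := by
    rw [hinner]; simp
  have hxy' : ‖x + y'‖^2 = 2*a^2 - 2*(τ*(a/b)) := by
    have hns := norm_add_sq (𝕜 := ℂ) x y'
    rw [hre, hny'] at hns
    rw [hns]; ring
  have hb1 := hbound x hx y' hy'B
  rw [hny', max_self] at hb1
  have hsq : a^2 ≤ C^2 * (2*a^2 - 2*(τ*(a/b))) := by
    have h5 : a^2 ≤ (C*‖x + y'‖)^2 := by
      nlinarith [norm_nonneg (x + y')]
    rw [mul_pow, hxy'] at h5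
    exact h5
  have hid : (1/(2*C^2))*(2*C^2) = 1 := by field_simp
  have h6 : a*b ≤ C^2*(2*(a*b) - 2*τ) := by
    have h7 := mul_le_mul_of_nonneg_right hsq hb.le
    have h8 : (2*a^2 - 2*(τ*(a/b)))*b = 2*a^2*b - 2*τ*a := by field_simp
    rw [mul_assoc, h8] at h7
    have h9 : a*(a*b) ≤ a*(C^2*(2*(a*b) - 2*τ)) := by nlinarith
    exact le_of_mul_le_mul_left h9 ha
  have hd : (0:ℝ) < 2*C^2 := by positivity
  have h10 : 2*C^2*τ ≤ (2*C^2)*(a*b) - a*b := by nlinarith [h6]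
  have h11 : (1 - 1/(2*C^2))*(a*b) = ((2*C^2)*(a*b) - a*b)/(2*C^2) := by
    field_simp
  rw [h11, le_div_iff₀ hd]
  linarith [h10]

/-- `H₁ + H₂` is closed iff `‖P₁P₂ − P_{H₁ ∩ H₂}‖ < 1`. -/
theorem stmt1 {H : Type*} [NormedAddCommGroup H] [InnerProductSpace ℂ H] [CompleteSpace H]
    (H₁ H₂ : Submodule ℂ H) [CompleteSpace H₁] [CompleteSpace H₂]
    [CompleteSpace ↥(H₁ ⊓ H₂)] :
    IsClosed ((H₁ ⊔ H₂ : Submodule ℂ H) : Set H) ↔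
      ‖proj H₁ * proj H₂ - proj (H₁ ⊓ H₂)‖ < 1 := by
  set M : Submodule ℂ H := H₁ ⊓ H₂ with hM
  set T : H →L[ℂ] H := proj H₁ * proj H₂ - proj M with hT
  have hMH₁ : M ≤ H₁ := inf_le_left
  have hMH₂ : M ≤ H₂ := inf_le_right
  have hH₁cl : IsClosed (H₁ : Set H) :=
    (completeSpace_coe_iff_isComplete.1 ‹CompleteSpace H₁›).isClosed
  have hH₂cl : IsClosed (H₂ : Set H) :=
    (completeSpace_coe_iff_isComplete.1 ‹CompleteSpace H₂›).isClosed
  constructor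
  · intro hcl
    set A : Submodule ℂ H := H₁ ⊓ Mᗮ with hA
    set B : Submodule ℂ H := H₂ ⊓ Mᗮ with hB
    have hAcl : IsClosed (A : Set H) := hH₁cl.inter (Submodule.isClosed_orthogonal M)
    have hBcl : IsClosed (B : Set H) := hH₂cl.inter (Submodule.isClosed_orthogonal M)
    haveI : CompleteSpace A := hAcl.completeSpace_coe
    haveI : CompleteSpace B := hBcl.completeSpace_coe
    have hABset : ((A ⊔ B : Submodule ℂ H) : Set H) =
        ((H₁ ⊔ H₂ : Submodule ℂ H) : Set H) ∩ (Mᗮ : Set H) := by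
      ext z
      constructor
      · intro hz
        rcases Submodule.mem_sup.1 hz with ⟨x, hx, y, hy, rfl⟩
        rcases Submodule.mem_inf.1 hx with ⟨hx1, hxo⟩
        rcases Submodule.mem_inf.1 hy with ⟨hy1, hyo⟩
        exact ⟨Submodule.add_mem_sup hx1 hy1, Submodule.add_mem _ hxo hyo⟩
      · rintro ⟨hz1, hz2⟩
        rcases Submodule.mem_sup.1 hz1 with ⟨a, ha, b, hb, rfl⟩
        have ha' : a - proj M a ∈ A :=
          Submodule.mem_inf.2 ⟨Submodule.sub_mem _ ha (hMH₁ (proj_mem M a)),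
            Submodule.sub_starProjection_mem_orthogonal (K := M) a⟩
        have hb' : b - proj M b ∈ B :=
          Submodule.mem_inf.2 ⟨Submodule.sub_mem _ hb (hMH₂ (proj_mem M b)),
            Submodule.sub_starProjection_mem_orthogonal (K := M) b⟩
        have hm : proj M a + proj M b ∈ M :=
          Submodule.add_mem _ (proj_mem M a) (proj_mem M b)
        have hmo : proj M a + proj M b ∈ Mᗮ := by
          have heq : proj M a + proj M b = (a + b) - (a - proj M a) - (b - proj M b) := by
            abel
          rw [heq]
          exact Submodule.sub_mem _ (Submodule.sub_mem _ hz2 (Submodule.mem_inf.1 ha').2)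
            (Submodule.mem_inf.1 hb').2
        have hm0 : proj M a + proj M b = 0 :=
          inner_self_eq_zero.1 ((Submodule.mem_orthogonal M _).1 hmo _ hm)
        have heq2 : (a - proj M a) + (b - proj M b) = a + b := by
          rw [sub_add_sub_comm, hm0, sub_zero]
        exact heq2 ▸ Submodule.add_mem_sup ha' hb'
    have hABcl : IsClosed ((A ⊔ B : Submodule ℂ H) : Set H) := by
      rw [hABset]; exact hcl.inter (Submodule.isClosed_orthogonal M)
    haveI : CompleteSpace ↥(A ⊔ B) := hABcl.completeSpace_coe
    set φ : (A × B) →L[ℂ] H :=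
      A.subtypeL.comp (ContinuousLinearMap.fst ℂ A B) +
        B.subtypeL.comp (ContinuousLinearMap.snd ℂ A B) with hφdef
    have hφ : ∀ p : A × B, φ p = (p.1 : H) + (p.2 : H) := fun p => rfl
    have hmemAB : ∀ p : A × B, φ p ∈ A ⊔ B := fun p =>
      hφ p ▸ Submodule.add_mem_sup p.1.2 p.2.2
    set ψ : (A × B) →L[ℂ] ↥(A ⊔ B) := φ.codRestrict (A ⊔ B) hmemAB with hψdef
    have hAB0 : ∀ x : H, x ∈ A → x ∈ B → x = 0 := by
      intro x hxA hxB
      have hxM : x ∈ M :=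
        Submodule.mem_inf.2 ⟨(Submodule.mem_inf.1 hxA).1, (Submodule.mem_inf.1 hxB).1⟩
      exact inner_self_eq_zero.1
        ((Submodule.mem_orthogonal M x).1 (Submodule.mem_inf.1 hxA).2 x hxM)
    have hker : LinearMap.ker (ψ : A × B →ₗ[ℂ] ↥(A ⊔ B)) = ⊥ := by
      rw [LinearMap.ker_eq_bot']
      intro p hp
      simp only [ContinuousLinearMap.coe_coe] at hp
      have h0 : (p.1 : H) + (p.2 : H) = 0 := by
        have h1 : ((ψ p : ↥(A ⊔ B)) : H) = 0 := by rw [hp]; rfl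
        rwa [ContinuousLinearMap.coe_codRestrict_apply, hφ] at h1
      have hp1 : (p.1 : H) = 0 := by
        have hmem : (p.1 : H) ∈ B := by
          have heq3 : (p.1 : H) = -(p.2 : H) := eq_neg_of_add_eq_zero_left h0
          rw [heq3]
          exact Submodule.neg_mem _ p.2.2
        exact hAB0 _ p.1.2 hmem
      have hp2 : (p.2 : H) = 0 := by rw [hp1, zero_add] at h0; exact h0
      have : p = (0, 0) := by
        ext
        · exact congrArg id hp1
        · exact congrArg id hp2
      exact this
    have hsurj : LinearMap.range (ψ : A × B →ₗ[ℂ] ↥(A ⊔ B)) = ⊤ := by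
      rw [LinearMap.range_eq_top]
      rintro ⟨z, hz⟩
      rcases Submodule.mem_sup.1 hz with ⟨x, hx, y, hy, rfl⟩
      exact ⟨(⟨x, hx⟩, ⟨y, hy⟩), Subtype.ext rfl⟩
    obtain ⟨C, hC1, hbound⟩ : ∃ C : ℝ, 1 ≤ C ∧
        ∀ x ∈ A, ∀ y ∈ B, max ‖x‖ ‖y‖ ≤ C * ‖x + y‖ := by
      set e := ContinuousLinearEquiv.ofBijective ψ hker hsurj with hedef
      refine ⟨max ‖(e.symm : ↥(A ⊔ B) →L[ℂ] A × B)‖ 1, le_max_right _ _, ?_⟩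
      intro x hx y hy
      set p : A × B := (⟨x, hx⟩, ⟨y, hy⟩) with hpdef
      have h1 : e.symm (ψ p) = p :=
        ContinuousLinearEquiv.ofBijective_symm_apply_apply ψ hker hsurj p
      have h2 := (e.symm : ↥(A ⊔ B) →L[ℂ] A × B).le_opNorm (ψ p)
      rw [ContinuousLinearEquiv.coe_coe, h1] at h2
      have h3 : ‖p‖ = max ‖x‖ ‖y‖ := rfl
      have h4 : ‖ψ p‖ = ‖x + y‖ := rfl
      rw [h3, h4] at h2
      calc max ‖x‖ ‖y‖ ≤ ‖(e.symm : ↥(A ⊔ B) →L[ℂ] A × B)‖ * ‖x + y‖ := h2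
        _ ≤ (max ‖(e.symm : ↥(A ⊔ B) →L[ℂ] A × B)‖ 1) * ‖x + y‖ :=
            mul_le_mul_of_nonneg_right (le_max_left _ _) (norm_nonneg _)
    have hC0 : (0:ℝ) < C := lt_of_lt_of_le one_pos hC1
    set c : ℝ := 1 - 1/(2*C^2) with hcdef
    have hCsq : (1:ℝ) ≤ C^2 := by nlinarith
    have hc0 : 0 ≤ c := by
      rw [hcdef]
      have h2 : (2:ℝ) ≤ 2*C^2 := by nlinarith
      have h1 : 1/(2*C^2) ≤ 1/2 := by
        rw [div_le_div_iff₀ (by positivity) (by norm_num)]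
        linarith
      linarith [h1]
    have hc1 : c < 1 := by
      rw [hcdef]
      have : 0 < 1/(2*C^2) := by positivity
      linarith
    have hang : ∀ x ∈ A, ∀ y ∈ B, ‖⟪x, y⟫_ℂ‖ ≤ c * (‖x‖ * ‖y‖) :=
      norm_inner_le_of_bound A B hC1 hbound
    -- final operator-norm bound
    have hfin : ∀ z : H, ‖T z‖ ≤ c * ‖z‖ := by
      intro z
      set y : H := proj H₂ z - proj M z with hy
      have hyB : y ∈ B := by
        refine Submodule.mem_inf.2 ⟨Submodule.sub_mem _ (proj_mem H₂ z)
          (hMH₂ (proj_mem M z)), (Submodule.mem_orthogonal M y).2 ?_⟩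
        intro m hm
        rw [hy, inner_sub_right, ← inner_proj_left H₂ m z, ← inner_proj_left M m z,
          proj_eq_self H₂ (hMH₂ hm), proj_eq_self M hm, sub_self]
      set x : H := proj H₁ y with hx
      have hxH₁ : x ∈ H₁ := proj_mem H₁ y
      have hxA : x ∈ A := by
        refine Submodule.mem_inf.2 ⟨hxH₁, (Submodule.mem_orthogonal M x).2 ?_⟩
        intro m hm
        rw [hx, ← inner_proj_left H₁ m y, proj_eq_self H₁ (hMH₁ hm)]
        exact (Submodule.mem_orthogonal M y).1 (Submodule.mem_inf.1 hyB).2 m hm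
      have hTz : T z = x := by
        rw [hT, hx, hy]
        simp only [ContinuousLinearMap.sub_apply, ContinuousLinearMap.mul_apply]
        rw [map_sub, proj_eq_self H₁ (hMH₁ (proj_mem M z))]
      have hinner2 : ‖x‖^2 ≤ c * (‖x‖ * ‖y‖) := by
        have h2 : ⟪x, x⟫_ℂ = ⟪x, y⟫_ℂ := by
          conv_lhs => rw [hx]
          rw [← inner_proj_left H₁ x y, proj_eq_self H₁ hxH₁]
        calc ‖x‖^2 = RCLike.re ⟪x, x⟫_ℂ := (inner_self_eq_norm_sq (𝕜 := ℂ) x).symm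
          _ = RCLike.re ⟪x, y⟫_ℂ := by rw [h2]
          _ ≤ ‖⟪x, y⟫_ℂ‖ := RCLike.re_le_norm _
          _ ≤ c * (‖x‖ * ‖y‖) := hang x hxA y hyB
      have hxley : ‖x‖ ≤ c * ‖y‖ := by
        rcases eq_or_lt_of_le (norm_nonneg x) with h | h
        · rw [← h]; positivity
        · nlinarith [hinner2]
      have hyz : ‖y‖ ≤ ‖z‖ := by
        have heq : y = proj H₂ (z - proj M z) := by
          rw [hy, map_sub, proj_eq_self H₂ (hMH₂ (proj_mem M z))]
        rw [heq]
        exact (norm_proj_le H₂ _).trans (norm_sub_proj_le M z)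
      rw [hTz]
      calc ‖x‖ ≤ c * ‖y‖ := hxley
        _ ≤ c * ‖z‖ := mul_le_mul_of_nonneg_left hyz hc0
    exact lt_of_le_of_lt (T.opNorm_le_bound hc0 hfin) hc1
  · intro hTlt
    have hc0 : (0:ℝ) ≤ ‖T‖ := norm_nonneg _
    -- H₁ ⊔ H₂ = (H₁ ⊓ Mᗮ) ⊔ H₂
    have hsup : H₁ ⊔ H₂ = (H₁ ⊓ Mᗮ) ⊔ H₂ := by
      apply le_antisymm
      · apply sup_le _ le_sup_right
        intro a ha
        have h1 : a - proj M a ∈ H₁ ⊓ Mᗮ := by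
          refine Submodule.mem_inf.2 ⟨?_, Submodule.sub_starProjection_mem_orthogonal (K := M) a⟩
          exact Submodule.sub_mem _ ha (hMH₁ (proj_mem M a))
        have h2 : proj M a ∈ H₂ := hMH₂ (proj_mem M a)
        have : a = (a - proj M a) + proj M a := by abel
        rw [this]
        exact Submodule.add_mem_sup h1 h2
      · exact sup_le (inf_le_left.trans le_sup_left) le_sup_right
    rw [hsup]
    apply sup_isClosed _ _ (hH₁cl.inter (Submodule.isClosed_orthogonal M)) hH₂cl hc0 hTlt
    intro x hx y hy
    rcases Submodule.mem_inf.1 hx with ⟨hx1, hxo⟩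
    have hkey : ⟪x, y⟫_ℂ = ⟪x, T y⟫_ℂ := by
      have e1 : ⟪x, proj H₁ (proj H₂ y)⟫_ℂ = ⟪x, y⟫_ℂ := by
        rw [← inner_proj_left, proj_eq_self H₁ hx1, proj_eq_self H₂ hy]
      have e2 : ⟪x, proj M y⟫_ℂ = 0 := by
        rw [← inner_proj_left, proj_eq_zero M hxo, inner_zero_left]
      rw [hT]
      simp only [ContinuousLinearMap.sub_apply, ContinuousLinearMap.mul_apply,
        inner_sub_right, e1, e2, sub_zero]
    rw [hkey]
    calc ‖⟪x, T y⟫_ℂ‖ ≤ ‖x‖ * ‖T y‖ := norm_inner_le_norm _ _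
      _ ≤ ‖x‖ * (‖T‖ * ‖y‖) := by
          exact mul_le_mul_of_nonneg_left (T.le_opNorm y) (norm_nonneg x)
      _ = ‖T‖ * (‖x‖ * ‖y‖) := by ring
end

section
/- Let H be a complex Hilbert space and H₁, H₂ closed subspaces of H. Then H₁ + H₂ is closed in H if and only if H₁⊥ + H₂⊥ is closed in H, where K⊥ denotes the orthogonal complement of a subspace K. -/
open scoped InnerProductSpace

/-- Key lemma: if `M ⊔ N` is closed, then `Mᗮ ⊔ Nᗮ = (M ⊓ N)ᗮ`. -/
theorem sup_orthogonal_eq_inf_orthogonal {H : Type*} [NormedAddCommGroup H]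
    [InnerProductSpace ℂ H] [CompleteSpace H] (M N : Submodule ℂ H)
    (hM : IsClosed (M : Set H)) (hN : IsClosed (N : Set H))
    (hsup : IsClosed ((M ⊔ N : Submodule ℂ H) : Set H)) :
    (Mᗮ ⊔ Nᗮ : Submodule ℂ H) = (M ⊓ N)ᗮ := by
  refine le_antisymm (sup_le (Submodule.orthogonal_le inf_le_left)
    (Submodule.orthogonal_le inf_le_right)) ?_
  intro w hw
  haveI : CompleteSpace M := hM.completeSpace_coe
  haveI : CompleteSpace N := hN.completeSpace_coe
  set F : Submodule ℂ H := M ⊔ N with hF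
  haveI : CompleteSpace F := hsup.completeSpace_coe
  -- the addition map `M × N → F`
  set T₀ : M × N →L[ℂ] H :=
    M.subtypeL.comp (ContinuousLinearMap.fst ℂ M N)
      + N.subtypeL.comp (ContinuousLinearMap.snd ℂ M N) with hT₀
  have hT₀mem : ∀ p : M × N, T₀ p ∈ F := by
    intro p
    exact Submodule.add_mem_sup p.1.2 p.2.2
  set T : M × N →L[ℂ] F := T₀.codRestrict F hT₀mem with hT
  have hTapp : ∀ p : M × N, ((T p : F) : H) = (p.1 : H) + (p.2 : H) := fun p => rfl
  have hTsurj : Function.Surjective T := by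
    rintro ⟨z, hz⟩
    rcases Submodule.mem_sup.mp hz with ⟨x, hx, y, hy, hxy⟩
    exact ⟨(⟨x, hx⟩, ⟨y, hy⟩), Subtype.ext hxy⟩
  obtain ⟨C, hC0, hC⟩ := T.exists_preimage_norm_le hTsurj
  -- define the functional `g` on `F`
  set g : F → ℂ := fun z => ⟪w, ((Classical.choose (hC z)).1 : H)⟫_ℂ with hg
  -- well-definedness
  have hwd : ∀ (z : F) (p : M × N), T p = z → g z = ⟪w, (p.1 : H)⟫_ℂ := by
    intro z p hp
    set q := Classical.choose (hC z) with hq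
    have hq' : T q = z := (Classical.choose_spec (hC z)).1
    have hsub : (p.1 : H) - (q.1 : H) ∈ M ⊓ N := by
      constructor
      · exact Submodule.sub_mem M p.1.2 q.1.2
      · have h1 : (p.1 : H) + (p.2 : H) = (q.1 : H) + (q.2 : H) := by
          have := congrArg (fun x : F => (x : H)) (hp.trans hq'.symm)
          simpa [hTapp] using this
        have h2 : (p.1 : H) - (q.1 : H) = (q.2 : H) - (p.2 : H) := by
          rw [sub_eq_sub_iff_add_eq_add, h1, add_comm]
        rw [h2]
        exact Submodule.sub_mem N q.2.2 p.2.2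
    have h0 : ⟪w, (p.1 : H) - (q.1 : H)⟫_ℂ = 0 :=
      ((M ⊓ N).mem_orthogonal' w).mp hw _ hsub
    rw [inner_sub_right] at h0
    have : ⟪w, (p.1 : H)⟫_ℂ = ⟪w, (q.1 : H)⟫_ℂ := by linear_combination h0
    exact this.symm
  -- g is linear
  have hadd : ∀ z z' : F, g (z + z') = g z + g z' := by
    intro z z'
    set p := Classical.choose (hC z) with hp
    set p' := Classical.choose (hC z') with hp'
    have h1 : T p = z := (Classical.choose_spec (hC z)).1
    have h2 : T p' = z' := (Classical.choose_spec (hC z')).1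
    have h3 : T (p + p') = z + z' := by rw [map_add, h1, h2]
    rw [hwd (z + z') (p + p') h3, hwd z p h1, hwd z' p' h2]
    simp [inner_add_right]
  have hsmul : ∀ (c : ℂ) (z : F), g (c • z) = c • g z := by
    intro c z
    set p := Classical.choose (hC z) with hp
    have h1 : T p = z := (Classical.choose_spec (hC z)).1
    have h3 : T (c • p) = c • z := by rw [map_smul, h1]
    rw [hwd (c • z) (c • p) h3, hwd z p h1]
    simp [inner_smul_right]
  -- boundedness
  have hbound : ∀ z : F, ‖g z‖ ≤ ‖w‖ * C * ‖z‖ := by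
    intro z
    set p := Classical.choose (hC z) with hp
    have h2 : ‖p‖ ≤ C * ‖z‖ := (Classical.choose_spec (hC z)).2
    calc ‖g z‖ ≤ ‖w‖ * ‖(p.1 : H)‖ := norm_inner_le_norm _ _
      _ ≤ ‖w‖ * ‖p‖ := by
          gcongr
          exact norm_fst_le p
      _ ≤ ‖w‖ * (C * ‖z‖) := by gcongr
      _ = ‖w‖ * C * ‖z‖ := by ring
  set G : F →L[ℂ] ℂ :=
    LinearMap.mkContinuous ⟨⟨g, hadd⟩, hsmul⟩ (‖w‖ * C) hbound with hG
  -- extend to all of H via orthogonal projection, and apply Riesz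
  set Gh : H →L[ℂ] ℂ := G.comp (F.orthogonalProjectionOnto) with hGh
  set u : H := (InnerProductSpace.toDual ℂ H).symm Gh with hu
  have hu' : ∀ z : H, ⟪u, z⟫_ℂ = Gh z := fun z =>
    InnerProductSpace.toDual_symm_apply
  -- evaluate Gh on elements of F
  have hGF : ∀ (z : H) (hz : z ∈ F), Gh z = g ⟨z, hz⟩ := by
    intro z hz
    have : F.orthogonalProjectionOnto z = ⟨z, hz⟩ :=
      Submodule.orthogonalProjectionOnto_mem_subspace_eq_self (⟨z, hz⟩ : F)
    simp only [hGh, ContinuousLinearMap.comp_apply, this]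
    rfl
  -- u ∈ Nᗮ
  have huN : u ∈ Nᗮ := by
    rw [Submodule.mem_orthogonal']
    intro y hy
    have hyF : y ∈ F := Submodule.mem_sup_right hy
    have hdec : T (0, ⟨y, hy⟩) = ⟨y, hyF⟩ := by
      apply Subtype.ext
      simp [hTapp]
    rw [hu' y, hGF y hyF, hwd _ _ hdec]
    simp
  -- w - u ∈ Mᗮ
  have hwuM : w - u ∈ Mᗮ := by
    rw [Submodule.mem_orthogonal']
    intro x hx
    have hxF : x ∈ F := Submodule.mem_sup_left hx
    have hdec : T (⟨x, hx⟩, 0) = ⟨x, hxF⟩ := by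
      apply Subtype.ext
      simp [hTapp]
    have h1 : ⟪u, x⟫_ℂ = ⟪w, x⟫_ℂ := by
      rw [hu' x, hGF x hxF, hwd _ _ hdec]
    rw [inner_sub_left, h1]
    ring
  have : w = (w - u) + u := by abel
  rw [this]
  exact Submodule.add_mem_sup hwuM huN

/-- `H₁ + H₂` is closed iff `H₁⊥ + H₂⊥` is closed. -/
theorem stmt2 {H : Type*} [NormedAddCommGroup H] [InnerProductSpace ℂ H] [CompleteSpace H]
    (H₁ H₂ : Submodule ℂ H) (h₁ : IsClosed (H₁ : Set H)) (h₂ : IsClosed (H₂ : Set H)) :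
    IsClosed ((H₁ ⊔ H₂ : Submodule ℂ H) : Set H) ↔
      IsClosed ((H₁ᗮ ⊔ H₂ᗮ : Submodule ℂ H) : Set H) := by
  haveI : CompleteSpace H₁ := h₁.completeSpace_coe
  haveI : CompleteSpace H₂ := h₂.completeSpace_coe
  constructor
  · intro h
    rw [sup_orthogonal_eq_inf_orthogonal H₁ H₂ h₁ h₂ h]
    exact Submodule.isClosed_orthogonal _
  · intro h
    have key := sup_orthogonal_eq_inf_orthogonal H₁ᗮ H₂ᗮ
      H₁.isClosed_orthogonal H₂.isClosed_orthogonal h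
    rw [Submodule.orthogonal_orthogonal, Submodule.orthogonal_orthogonal] at key
    rw [key]
    exact Submodule.isClosed_orthogonal _
end

section
/- Let H be a complex Hilbert space, H₁, …, Hₙ closed subspaces of H, and let Γ be a connected undirected graph on the vertex set {1, …, n} with edge set E(Γ). Then H₁ + … + Hₙ = H if and only if there exists ε > 0 such that for all choices of vectors x_k ∈ H_k⊥ (1 ≤ k ≤ n) one has Σ_{{i,j} ∈ E(Γ)} ‖x_i − x_j‖² ≥ ε Σ_{k=1}^{n} ‖x_k‖². -/
open scoped NNReal

set_option maxHeartbeats 1000000 in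
theorem stmt9_backward {H : Type*} [NormedAddCommGroup H] [InnerProductSpace ℂ H] [CompleteSpace H]
    {n : ℕ} (H_ : Fin n → Submodule ℂ H) (hcl : ∀ i, IsClosed ((H_ i : Set H)))
    (Γ : SimpleGraph (Fin n)) [DecidableRel Γ.Adj] (hconn : Γ.Connected)
    (ε : ℝ) (hε : 0 < ε)
    (hineq : ∀ x : Fin n → H, (∀ k, x k ∈ (H_ k)ᗮ) →
        ε * ∑ k, ‖x k‖ ^ 2 ≤
          ∑ e ∈ Γ.edgeFinset,
            Sym2.lift ⟨fun i j => ‖x i - x j‖ ^ 2, fun i j => by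
              show ‖x i - x j‖ ^ 2 = ‖x j - x i‖ ^ 2; rw [norm_sub_rev]⟩ e) :
    (⨆ i, H_ i) = (⊤ : Submodule ℂ H) := by
  classical
  haveI hCS : ∀ k, CompleteSpace (H_ k) := fun k => (hcl k).completeSpace_coe
  have hne : Nonempty (Fin n) := hconn.nonempty
  have hn : 0 < n := Fin.pos_iff_nonempty.mpr hne
  have hn' : (0:ℝ) < n := by exact_mod_cast hn
  set Pk : Fin n → (H →L[ℂ] H) :=
    fun k => (H_ k).subtypeL.comp (Submodule.orthogonalProjection (H_ k)) with hPk
  set A : H →L[ℂ] H := ∑ k, Pk k with hA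
  have hPk_mem : ∀ k y, Pk k y ∈ H_ k := fun k y => (Submodule.orthogonalProjection (H_ k) y).2
  have hx_mem : ∀ k (y : H), y - Pk k y ∈ (H_ k)ᗮ := fun k y =>
    Submodule.sub_starProjection_mem_orthogonal (K := H_ k) y
  set S : H → ℝ := fun y => ∑ k, ‖Pk k y‖ ^ 2 with hSdef
  have hS0 : ∀ y, 0 ≤ S y := fun y => Finset.sum_nonneg fun k _ => sq_nonneg _
  have hAy : ∀ y, (inner ℂ (A y) y : ℂ) = ((S y : ℝ) : ℂ) := by
    intro y
    simp only [hA, ContinuousLinearMap.sum_apply, sum_inner, hSdef]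
    push_cast
    refine Finset.sum_congr rfl fun k _ => ?_
    have h0 : (inner ℂ (Pk k y) (y - Pk k y) : ℂ) = 0 :=
      (Submodule.mem_orthogonal _ _).mp (hx_mem k y) _ (hPk_mem k y)
    have h1 : (inner ℂ (Pk k y) y : ℂ)
        = inner ℂ (Pk k y) (Pk k y) + inner ℂ (Pk k y) (y - Pk k y) := by
      rw [← inner_add_right]; congr 1; abel
    rw [h1, h0, add_zero, inner_self_eq_norm_sq_to_K]
    norm_cast
  -- main quantitative bound
  have hM : ∀ y : H, (n:ℝ) * ‖y‖^2 ≤ (8 * Γ.edgeFinset.card / ε + 2) * S y := by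
    intro y
    set x : Fin n → H := fun k => y - Pk k y with hxdef
    have h1 := hineq x (fun k => hx_mem k y)
    have h2 : (∑ e ∈ Γ.edgeFinset,
        Sym2.lift ⟨fun i j => ‖x i - x j‖ ^ 2, fun i j => by
          show ‖x i - x j‖ ^ 2 = ‖x j - x i‖ ^ 2; rw [norm_sub_rev]⟩ e)
        ≤ ∑ _e ∈ Γ.edgeFinset, 4 * S y := by
      refine Finset.sum_le_sum fun e he => ?_
      clear he
      induction e using Sym2.ind with
      | _ i j =>
        simp only [Sym2.lift_mk]
        have hi : ‖Pk i y‖^2 ≤ S y := Finset.single_le_sum (f := fun k => ‖Pk k y‖^2)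
          (fun k _ => sq_nonneg _) (Finset.mem_univ i)
        have hj : ‖Pk j y‖^2 ≤ S y := Finset.single_le_sum (f := fun k => ‖Pk k y‖^2)
          (fun k _ => sq_nonneg _) (Finset.mem_univ j)
        have hd : ‖x i - x j‖ ≤ ‖Pk i y‖ + ‖Pk j y‖ := by
          have : x i - x j = Pk j y - Pk i y := by simp [hxdef]
          rw [this]
          exact (norm_sub_le _ _).trans (by rw [add_comm])
        nlinarith [pow_le_pow_left₀ (norm_nonneg (x i - x j)) hd 2,
          sq_nonneg (‖Pk i y‖ - ‖Pk j y‖), hi, hj]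
    rw [Finset.sum_const, nsmul_eq_mul] at h2
    have h3 : ∑ k, ‖x k‖^2 ≤ 4 * Γ.edgeFinset.card * S y / ε := by
      rw [le_div_iff₀ hε]
      nlinarith [h1.trans h2]
    have h4 : (n:ℝ) * ‖y‖^2 ≤ 2 * ∑ k, ‖x k‖^2 + 2 * S y := by
      have hpt : ∀ k : Fin n, ‖y‖^2 ≤ 2*‖x k‖^2 + 2*‖Pk k y‖^2 := by
        intro k
        have h : ‖y‖ ≤ ‖y - Pk k y‖ + ‖Pk k y‖ := by
          simpa using norm_add_le (y - Pk k y) (Pk k y)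
        show ‖y‖^2 ≤ 2*‖y - Pk k y‖^2 + 2*‖Pk k y‖^2
        nlinarith [pow_le_pow_left₀ (norm_nonneg y) h 2,
          sq_nonneg (‖y - Pk k y‖ - ‖Pk k y‖)]
      have := Finset.sum_le_sum (fun k (_ : k ∈ Finset.univ) => hpt k)
      simp only [Finset.sum_add_distrib, Finset.sum_const, Finset.card_univ,
        Fintype.card_fin, nsmul_eq_mul, ← Finset.mul_sum] at this
      exact this
    have hcard : (0:ℝ) ≤ Γ.edgeFinset.card := Nat.cast_nonneg _
    calc (n:ℝ) * ‖y‖^2 ≤ 2 * ∑ k, ‖x k‖^2 + 2 * S y := h4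
      _ ≤ 2 * (4 * Γ.edgeFinset.card * S y / ε) + 2 * S y := by
          have := h3; nlinarith
      _ = (8 * Γ.edgeFinset.card / ε + 2) * S y := by ring
  -- A is invertible
  set c : ℝ := n / (8 * Γ.edgeFinset.card / ε + 2) with hc
  have hden : (0:ℝ) < 8 * Γ.edgeFinset.card / ε + 2 := by positivity
  have hc0 : 0 < c := by positivity
  have hbij : Function.Bijective A := by
    rw [← ContinuousLinearMap.isUnit_iff_bijective]
    refine ContinuousLinearMap.isUnit_of_forall_le_norm_inner_map A
      (c := c.toNNReal) (by simpa using hc0) ?_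
    intro y
    rw [hAy y]
    have : ‖((S y : ℝ) : ℂ)‖ = S y := by
      rw [Complex.norm_real, Real.norm_of_nonneg (hS0 y)]
    rw [this, Real.coe_toNNReal _ hc0.le, hc]
    rw [mul_div_assoc']
    rw [div_le_iff₀ hden]
    calc ‖y‖^2 * n = n * ‖y‖^2 := by ring
      _ ≤ (8 * Γ.edgeFinset.card / ε + 2) * S y := hM y
      _ = S y * (8 * Γ.edgeFinset.card / ε + 2) := by ring
  rw [eq_top_iff]
  intro y _
  obtain ⟨w, hw⟩ := hbij.surjective y
  rw [← hw]
  have hAw : A w = ∑ k, Pk k w := by simp [hA, ContinuousLinearMap.sum_apply]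
  rw [hAw]
  exact Submodule.sum_mem _ fun k _ => (le_iSup H_ k) (hPk_mem k w)

set_option maxHeartbeats 2000000 in
theorem stmt9_forward {H : Type*} [NormedAddCommGroup H] [InnerProductSpace ℂ H] [CompleteSpace H]
    {n : ℕ} (H_ : Fin n → Submodule ℂ H) (hcl : ∀ i, IsClosed ((H_ i : Set H)))
    (Γ : SimpleGraph (Fin n)) [DecidableRel Γ.Adj] (hconn : Γ.Connected)
    (hsup : (⨆ i, H_ i) = (⊤ : Submodule ℂ H)) :
    ∃ ε > (0 : ℝ), ∀ x : Fin n → H, (∀ k, x k ∈ (H_ k)ᗮ) →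
        ε * ∑ k, ‖x k‖ ^ 2 ≤
          ∑ e ∈ Γ.edgeFinset,
            Sym2.lift ⟨fun i j => ‖x i - x j‖ ^ 2, fun i j => by
              show ‖x i - x j‖ ^ 2 = ‖x j - x i‖ ^ 2; rw [norm_sub_rev]⟩ e := by
  classical
  haveI hCS : ∀ k, CompleteSpace (H_ k) := fun k => (hcl k).completeSpace_coe
  have hne : Nonempty (Fin n) := hconn.nonempty
  have hn : 0 < n := Fin.pos_iff_nonempty.mpr hne
  have hn' : (0:ℝ) < n := by exact_mod_cast hn
  haveI : CompleteSpace (PiLp 2 fun k => ↥(H_ k)) :=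
    inferInstance
  -- the summation operator
  set T : PiLp 2 (fun k : Fin n => ↥(H_ k)) →L[ℂ] H :=
    ∑ k : Fin n, (H_ k).subtypeL.comp (PiLp.proj 2 (fun k : Fin n => ↥(H_ k)) k) with hTdef
  have hT : ∀ z, T z = ∑ k, ((z k : H)) := by
    intro z
    simp [hTdef, ContinuousLinearMap.sum_apply]
  have hrange : LinearMap.range (T : PiLp 2 (fun k : Fin n => ↥(H_ k)) →ₗ[ℂ] H) = ⊤ := by
    rw [← top_le_iff, ← hsup]
    refine iSup_le fun k => ?_
    intro y hy
    refine ⟨WithLp.toLp 2 (Pi.single k (⟨y, hy⟩ : H_ k) : ∀ j, ↥(H_ j)), ?_⟩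
    change T _ = y; rw [hT]; simp only [WithLp.ofLp_toLp]
    rw [Finset.sum_eq_single k]
    · simp
    · intro j _ hj; rw [Pi.single_eq_of_ne hj]; simp
    · intro h; exact absurd (Finset.mem_univ k) h
  have hsurj : Function.Surjective T := LinearMap.range_eq_top.mp hrange
  obtain ⟨C, hC0, hC⟩ := T.exists_preimage_norm_le hsurj
  refine ⟨((n:ℝ)^2 * (2 + 2*n*C^2))⁻¹, by positivity, ?_⟩
  intro x hx
  set f : Sym2 (Fin n) → ℝ :=
    Sym2.lift ⟨fun i j => ‖x i - x j‖, fun i j => norm_sub_rev _ _⟩ with hf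
  have hlift : ∀ (P) (e : Sym2 (Fin n)),
      Sym2.lift ⟨fun i j => ‖x i - x j‖ ^ 2, P⟩ e = f e ^ 2 := by
    intro P e
    induction e using Sym2.ind with
    | _ i j => simp [hf]
  refine le_trans ?_ (le_of_eq (Finset.sum_congr rfl fun e _ => (hlift _ e).symm))
  set S := ∑ k, ‖x k‖^2 with hS
  set E := ∑ e ∈ Γ.edgeFinset, f e ^ 2 with hE
  have hE0 : 0 ≤ E := Finset.sum_nonneg fun e _ => sq_nonneg _
  -- pairwise bound through the graph
  have hpair : ∀ i j, ‖x i - x j‖^2 ≤ n * E := by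
    intro i j
    obtain ⟨w⟩ := hconn.preconnected i j
    set p : Γ.Walk i j := (w.toPath : Γ.Walk i j) with hp
    have hpath : p.IsPath := w.toPath.2
    have htri : ∀ {a b : Fin n} (q : Γ.Walk a b), ‖x a - x b‖ ≤ (q.edges.map f).sum := by
      intro a b q
      induction q with
      | nil => simp
      | @cons a c b h q ih =>
        have htr : ‖x a - x b‖ ≤ ‖x a - x c‖ + ‖x c - x b‖ := by
          simpa [dist_eq_norm] using dist_triangle (x a) (x c) (x b)
        simp only [SimpleGraph.Walk.edges_cons, List.map_cons, List.sum_cons]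
        refine htr.trans (add_le_add ?_ ih)
        simp [hf]
    have h1 : ‖x i - x j‖ ≤ ∑ e ∈ p.edges.toFinset, f e := by
      rw [List.sum_toFinset _ hpath.edges_nodup]
      exact htri p
    have h2 : (∑ e ∈ p.edges.toFinset, f e)^2
        ≤ (p.edges.toFinset.card : ℝ) * ∑ e ∈ p.edges.toFinset, f e ^ 2 := by
      exact_mod_cast sq_sum_le_card_mul_sum_sq (s := p.edges.toFinset) (f := f)
    have hcard : (p.edges.toFinset.card : ℝ) ≤ n := by
      rw [List.toFinset_card_of_nodup hpath.edges_nodup, SimpleGraph.Walk.length_edges]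
      have := hpath.length_lt
      rw [Fintype.card_fin] at this
      exact_mod_cast this.le
    have hsub : ∑ e ∈ p.edges.toFinset, f e ^ 2 ≤ E := by
      refine Finset.sum_le_sum_of_subset_of_nonneg ?_ (fun _ _ _ => sq_nonneg _)
      intro e he
      rw [List.mem_toFinset] at he
      exact SimpleGraph.mem_edgeFinset.mpr (p.edges_subset_edgeSet he)
    calc ‖x i - x j‖^2 ≤ (∑ e ∈ p.edges.toFinset, f e)^2 :=
          pow_le_pow_left₀ (norm_nonneg _) h1 2
      _ ≤ (p.edges.toFinset.card : ℝ) * ∑ e ∈ p.edges.toFinset, f e ^ 2 := h2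
      _ ≤ (n:ℝ) * E := mul_le_mul hcard hsub
          (Finset.sum_nonneg fun _ _ => sq_nonneg _) hn'.le
  -- the mean
  set m : H := ((n:ℂ))⁻¹ • ∑ k, x k with hm
  set D := ∑ k, ‖x k - m‖^2 with hD
  have hD0 : 0 ≤ D := Finset.sum_nonneg fun k _ => sq_nonneg _
  have hDE : D ≤ (n:ℝ)^2 * E := by
    have hterm : ∀ k, ‖x k - m‖^2 ≤ n * E := by
      intro k
      have hxm : x k - m = (n:ℂ)⁻¹ • ∑ j : Fin n, (x k - x j) := by
        rw [Finset.sum_sub_distrib, Finset.sum_const, Finset.card_univ, Fintype.card_fin,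
          smul_sub, ← Nat.cast_smul_eq_nsmul ℂ, smul_smul,
          inv_mul_cancel₀ (by exact_mod_cast hn.ne' : (n:ℂ) ≠ 0), one_smul, hm]
      have hnorm1 : ‖x k - m‖ ≤ (n:ℝ)⁻¹ * ∑ j : Fin n, ‖x k - x j‖ := by
        rw [hxm, norm_smul, norm_inv, RCLike.norm_natCast]
        exact mul_le_mul_of_nonneg_left (norm_sum_le _ _) (by positivity)
      have hptw : ∀ j, ‖x k - x j‖ ≤ Real.sqrt ((n:ℝ) * E) := by
        intro j
        rw [show ‖x k - x j‖ = Real.sqrt (‖x k - x j‖^2) by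
          rw [Real.sqrt_sq (norm_nonneg _)]]
        exact Real.sqrt_le_sqrt (hpair k j)
      have hnorm2 : ‖x k - m‖ ≤ Real.sqrt ((n:ℝ) * E) := by
        refine hnorm1.trans ?_
        calc (n:ℝ)⁻¹ * ∑ j : Fin n, ‖x k - x j‖
            ≤ (n:ℝ)⁻¹ * ∑ j : Fin n, Real.sqrt ((n:ℝ) * E) := by
              gcongr with j _
              exact hptw j
          _ = Real.sqrt ((n:ℝ) * E) := by
              rw [Finset.sum_const, Finset.card_univ, Fintype.card_fin, nsmul_eq_mul]
              field_simp
      calc ‖x k - m‖^2 ≤ (Real.sqrt ((n:ℝ)*E))^2 :=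
            pow_le_pow_left₀ (norm_nonneg _) hnorm2 2
        _ = (n:ℝ) * E := Real.sq_sqrt (by positivity)
    calc D ≤ ∑ _k : Fin n, (n:ℝ) * E := Finset.sum_le_sum fun k _ => hterm k
      _ = (n:ℝ)^2 * E := by
          rw [Finset.sum_const, Finset.card_univ, Fintype.card_fin, nsmul_eq_mul]; ring
  -- decomposition bound : ‖m‖² ≤ C² * D
  obtain ⟨z, hz, hznorm⟩ := hC m
  have hz2 : ∑ k, ‖(z k : H)‖^2 ≤ C^2 * ‖m‖^2 := by
    have h1 : ∑ k, ‖(z k : H)‖^2 = ‖z‖^2 := by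
      rw [PiLp.norm_sq_eq_of_L2]
      exact Finset.sum_congr rfl fun k _ => rfl
    rw [h1]
    calc ‖z‖^2 ≤ (C*‖m‖)^2 := pow_le_pow_left₀ (norm_nonneg z) hznorm 2
      _ = C^2*‖m‖^2 := by ring
  have hmD : ‖m‖^2 ≤ C^2 * D := by
    have e1 : (inner ℂ m m : ℂ) = ∑ k, (inner ℂ (m - x k) ((z k : H)) : ℂ) := by
      calc (inner ℂ m m : ℂ) = inner ℂ m (T z) := by rw [hz]
        _ = ∑ k, (inner ℂ m ((z k : H)) : ℂ) := by rw [hT z, inner_sum]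
        _ = ∑ k, (inner ℂ (m - x k) ((z k : H)) : ℂ) := by
            refine Finset.sum_congr rfl fun k _ => ?_
            rw [inner_sub_left,
              (Submodule.mem_orthogonal' _ _).mp (hx k) _ (z k).2, sub_zero]
    have e2 : ‖m‖^2 ≤ ∑ k, ‖m - x k‖ * ‖(z k : H)‖ := by
      calc ‖m‖^2 = ‖(inner ℂ m m : ℂ)‖ := by
            rw [inner_self_eq_norm_sq_to_K, norm_pow, RCLike.norm_ofReal, abs_norm]
        _ = ‖∑ k, (inner ℂ (m - x k) ((z k : H)) : ℂ)‖ := by rw [e1]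
        _ ≤ ∑ k, ‖(inner ℂ (m - x k) ((z k : H)) : ℂ)‖ := norm_sum_le _ _
        _ ≤ ∑ k, ‖m - x k‖ * ‖(z k : H)‖ :=
            Finset.sum_le_sum fun k _ => norm_inner_le_norm _ _
    have e3 : (∑ k, ‖m - x k‖ * ‖(z k : H)‖)^2
        ≤ (∑ k, ‖m - x k‖^2) * ∑ k, ‖(z k : H)‖^2 :=
      Finset.sum_mul_sq_le_sq_mul_sq _ _ _
    have e4 : ∑ k : Fin n, ‖m - x k‖^2 = D := by
      rw [hD]; exact Finset.sum_congr rfl fun k _ => by rw [norm_sub_rev]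
    by_cases hm0 : ‖m‖ = 0
    · rw [hm0]
      norm_num
      positivity
    · have hm0' : 0 < ‖m‖^2 := by positivity
      have : (‖m‖^2)^2 ≤ D * (C^2 * ‖m‖^2) := by
        calc (‖m‖^2)^2 ≤ (∑ k, ‖m - x k‖ * ‖(z k : H)‖)^2 := by
              apply pow_le_pow_left₀ (by positivity) e2 2
          _ ≤ (∑ k, ‖m - x k‖^2) * ∑ k, ‖(z k : H)‖^2 := e3
          _ ≤ D * (C^2 * ‖m‖^2) := by
              rw [e4]
              exact mul_le_mul_of_nonneg_left hz2 hD0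
      have h5 : ‖m‖^2 * ‖m‖^2 ≤ (C^2*D) * ‖m‖^2 := by
        calc ‖m‖^2*‖m‖^2 = (‖m‖^2)^2 := by ring
          _ ≤ D*(C^2*‖m‖^2) := this
          _ = (C^2*D)*‖m‖^2 := by ring
      exact le_of_mul_le_mul_right h5 hm0'
  -- combine
  have hSD : S ≤ 2*D + 2*(n:ℝ)*‖m‖^2 := by
    have hpt : ∀ k : Fin n, ‖x k‖^2 ≤ 2*‖x k - m‖^2 + 2*‖m‖^2 := by
      intro k
      have h : ‖x k‖ ≤ ‖x k - m‖ + ‖m‖ := by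
        simpa using norm_add_le (x k - m) m
      nlinarith [pow_le_pow_left₀ (norm_nonneg (x k)) h 2,
        sq_nonneg (‖x k - m‖ - ‖m‖)]
    have := Finset.sum_le_sum fun k (_ : k ∈ Finset.univ) => hpt k
    simp only [Finset.sum_add_distrib, Finset.sum_const, Finset.card_univ,
      Fintype.card_fin, nsmul_eq_mul, ← Finset.mul_sum] at this
    rw [hS, hD]
    calc ∑ k, ‖x k‖^2 ≤ 2 * ∑ k, ‖x k - m‖^2 + (n:ℝ) * (2*‖m‖^2) := this
      _ = 2 * ∑ k, ‖x k - m‖^2 + 2*(n:ℝ)*‖m‖^2 := by ring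
  have hfinal : S ≤ (n:ℝ)^2 * (2 + 2*n*C^2) * E := by
    calc S ≤ 2*D + 2*(n:ℝ)*‖m‖^2 := hSD
      _ ≤ 2*D + 2*(n:ℝ)*(C^2*D) := by nlinarith [hmD]
      _ = (2 + 2*(n:ℝ)*C^2) * D := by ring
      _ ≤ (2 + 2*(n:ℝ)*C^2) * ((n:ℝ)^2 * E) := by
          have h0 : (0:ℝ) ≤ 2 + 2*(n:ℝ)*C^2 := by positivity
          exact mul_le_mul_of_nonneg_left hDE h0
      _ = (n:ℝ)^2 * (2 + 2*n*C^2) * E := by ring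
  rw [inv_mul_le_iff₀ (by positivity)]
  exact hfinal

/-- Let `Γ` be a connected graph on `{1, …, n}`. Then `H₁ + … + Hₙ = H` iff there is `ε > 0`
such that for all `x_k ∈ H_k⊥` one has
`Σ_{{i,j} ∈ E(Γ)} ‖x_i − x_j‖² ≥ ε Σ_k ‖x_k‖²`. -/
theorem stmt9 {H : Type*} [NormedAddCommGroup H] [InnerProductSpace ℂ H] [CompleteSpace H]
    {n : ℕ} (H_ : Fin n → Submodule ℂ H) (hcl : ∀ i, IsClosed ((H_ i : Set H)))
    (Γ : SimpleGraph (Fin n)) [DecidableRel Γ.Adj] (hconn : Γ.Connected) :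
    (⨆ i, H_ i) = (⊤ : Submodule ℂ H) ↔
      ∃ ε > (0 : ℝ), ∀ x : Fin n → H, (∀ k, x k ∈ (H_ k)ᗮ) →
        ε * ∑ k, ‖x k‖ ^ 2 ≤
          ∑ e ∈ Γ.edgeFinset,
            Sym2.lift ⟨fun i j => ‖x i - x j‖ ^ 2, fun i j => by show ‖x i - x j‖ ^ 2 = ‖x j - x i‖ ^ 2; rw [norm_sub_rev]⟩ e := by
  constructor
  · exact stmt9_forward H_ hcl Γ hconn
  · rintro ⟨ε, hε, hineq⟩
    exact stmt9_backward H_ hcl Γ hconn ε hε hineq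
end

section
/- Let X be a Banach space and X₁, …, Xₙ closed subspaces of X. Then: (1) if there exists ε > 0 such that ‖x₁ + … + xₙ‖ ≥ ε(‖x₁‖ + … + ‖x_{n−1}‖) for all x_j ∈ X_j (1 ≤ j ≤ n), then X₁, …, Xₙ are linearly independent and X₁ + … + Xₙ is closed in X; (2) conversely, if X₁, …, Xₙ are linearly independent and X₁ + … + Xₙ is closed in X, then there exists ε > 0 such that ‖x₁ + … + xₙ‖ ≥ ε(‖x₁‖ + … + ‖xₙ‖) for all x_j ∈ X_j (1 ≤ j ≤ n). -/
set_option maxHeartbeats 1000000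

open Submodule Finset
open scoped NNReal

/-- Criterion for a family of closed subspaces of a Banach space to be linearly independent
with closed sum.  Part (1): if `‖x₁ + … + xₙ‖ ≥ ε(‖x₁‖ + … + ‖x_{n−1}‖)` for some `ε > 0`,
then the subspaces are linearly independent and their sum is closed.
Part (2): conversely, linear independence plus closedness of the sum yields `ε > 0` with
`‖x₁ + … + xₙ‖ ≥ ε(‖x₁‖ + … + ‖xₙ‖)`. -/
theorem stmt11 {X : Type*} [NormedAddCommGroup X] [NormedSpace ℝ X] [CompleteSpace X]
    {n : ℕ} (X_ : Fin (n + 1) → Submodule ℝ X) (hcl : ∀ j, IsClosed ((X_ j : Set X))) :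
    ((∃ ε > (0 : ℝ), ∀ x : Fin (n + 1) → X, (∀ j, x j ∈ X_ j) →
        ε * ∑ j : Fin n, ‖x j.castSucc‖ ≤ ‖∑ j, x j‖) →
      ((∀ x : Fin (n + 1) → X, (∀ j, x j ∈ X_ j) → ∑ j, x j = 0 → ∀ j, x j = 0) ∧
        IsClosed ((⨆ j, X_ j : Submodule ℝ X) : Set X)))
    ∧
    (((∀ x : Fin (n + 1) → X, (∀ j, x j ∈ X_ j) → ∑ j, x j = 0 → ∀ j, x j = 0) ∧
        IsClosed ((⨆ j, X_ j : Submodule ℝ X) : Set X)) →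
      ∃ ε > (0 : ℝ), ∀ x : Fin (n + 1) → X, (∀ j, x j ∈ X_ j) →
        ε * ∑ j, ‖x j‖ ≤ ‖∑ j, x j‖) := by
  classical
  haveI : ∀ j, CompleteSpace (X_ j) := fun j => (hcl j).completeSpace_coe
  -- the summation operator from the product of the subspaces
  set T : (∀ j, X_ j) →L[ℝ] X :=
    ∑ j, (X_ j).subtypeL.comp (ContinuousLinearMap.proj j) with hTdef
  have hT : ∀ v : ∀ j, X_ j, T v = ∑ j, (v j : X) := by
    intro v
    simp [hTdef, ContinuousLinearMap.sum_apply]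
  have hrange : LinearMap.range (T : (∀ j, X_ j) →ₗ[ℝ] X) = ⨆ j, X_ j := by
    apply le_antisymm
    · rintro x ⟨v, rfl⟩
      rw [ContinuousLinearMap.coe_coe, hT]
      exact Submodule.sum_mem _ fun j _ =>
        Submodule.mem_iSup_of_mem j (v j).2
    · refine iSup_le fun j x hx => ?_
      refine ⟨Pi.single j ⟨x, hx⟩, ?_⟩
      rw [ContinuousLinearMap.coe_coe, hT]
      rw [Finset.sum_eq_single j]
      · simp
      · intro i _ hij
        simp [Pi.single_apply, hij]
      · simp
  constructor
  · -- Part (1)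
    rintro ⟨ε, hε, h⟩
    -- full inequality with all n+1 norms
    have hfull : ∀ x : Fin (n + 1) → X, (∀ j, x j ∈ X_ j) →
        (ε / (ε + 2)) * ∑ j, ‖x j‖ ≤ ‖∑ j, x j‖ := by
      intro x hx
      have hA := h x hx
      set S := ‖∑ j, x j‖ with hS
      set A := ∑ j : Fin n, ‖x (Fin.castSucc j)‖ with hAdef
      have hA0 : 0 ≤ A := Finset.sum_nonneg fun _ _ => norm_nonneg _
      have hlast : ‖x (Fin.last n)‖ ≤ S + A := by
        have : x (Fin.last n) = (∑ j, x j) - ∑ j : Fin n, x (Fin.castSucc j) := by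
          rw [Fin.sum_univ_castSucc]; abel
        rw [this]
        refine (norm_sub_le _ _).trans ?_
        gcongr
        exact norm_sum_le _ _
      have hsum : ∑ j, ‖x j‖ ≤ 2 * A + S := by
        rw [Fin.sum_univ_castSucc]
        have : ‖x (Fin.last n)‖ ≤ S + A := hlast
        linarith
      have hAS : A ≤ S / ε := by
        rw [le_div_iff₀ hε]; linarith [hA]
      have hS0 : 0 ≤ S := norm_nonneg _
      have key : ∑ j, ‖x j‖ ≤ ((ε + 2) / ε) * S := by
        have h1' : 2 * A + S ≤ 2 * (S / ε) + S := by linarith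
        have h2' : 2 * (S / ε) + S = ((ε + 2) / ε) * S := by field_simp; ring
        linarith
      rw [div_mul_eq_mul_div, div_le_iff₀ (by linarith : (0:ℝ) < ε + 2)]
      have heq : ε * (((ε + 2) / ε) * S) = S * (ε + 2) := by field_simp
      nlinarith [mul_le_mul_of_nonneg_left key hε.le]
    have hindep : ∀ x : Fin (n + 1) → X, (∀ j, x j ∈ X_ j) → ∑ j, x j = 0 → ∀ j, x j = 0 := by
      intro x hx hsum j
      have := hfull x hx
      rw [hsum, norm_zero] at this
      have hpos : (0:ℝ) < ε / (ε + 2) := div_pos hε (by linarith)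
      have h0 : ∑ j, ‖x j‖ ≤ 0 := by nlinarith [this]
      have : ∀ i ∈ Finset.univ, ‖x i‖ = 0 :=
        (Finset.sum_eq_zero_iff_of_nonneg (fun i _ => norm_nonneg _)).mp
          (le_antisymm h0 (Finset.sum_nonneg fun i _ => norm_nonneg _))
      exact norm_eq_zero.mp (this j (Finset.mem_univ j))
    refine ⟨hindep, ?_⟩
    -- closedness of the sum
    have hε' : (0:ℝ) < ε / (ε + 2) := div_pos hε (by linarith)
    have hanti : AntilipschitzWith ((ε + 2) / ε).toNNReal T := by
      apply ContinuousLinearMap.antilipschitz_of_bound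
      intro v
      have hcoe : ((((ε + 2) / ε).toNNReal : ℝ≥0) : ℝ) = (ε + 2) / ε :=
        Real.coe_toNNReal _ (le_of_lt (div_pos (by linarith) hε))
      rw [hcoe]
      have h1 : ‖v‖ ≤ ∑ j, ‖(v j : X)‖ := by
        rcases eq_or_ne v 0 with rfl | hv
        · simp [Finset.sum_nonneg fun i _ => norm_nonneg ((0:X_ i) : X)]
        · refine (pi_norm_le_iff_of_nonneg
            (Finset.sum_nonneg fun i _ => norm_nonneg _)).mpr fun i => ?_
          have : ‖v i‖ = ‖(v i : X)‖ := rfl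
          rw [this]
          exact Finset.single_le_sum (fun j _ => norm_nonneg ((v j : X))) (Finset.mem_univ i)
      have h3 : ε / (ε + 2) * ∑ j, ‖(v j : X)‖ ≤ ‖T v‖ := by
        have h2 := hfull (fun j => (v j : X)) (fun j => (v j).2)
        rw [← hT] at h2
        exact h2
      have h4 : ε * ∑ j, ‖(v j : X)‖ ≤ (ε + 2) * ‖T v‖ := by
        rw [div_mul_eq_mul_div, div_le_iff₀ (by linarith : (0:ℝ) < ε + 2)] at h3
        linarith
      rw [div_mul_eq_mul_div, le_div_iff₀ hε]
      nlinarith [mul_le_mul_of_nonneg_right h1 hε.le, h4, norm_nonneg (T v)]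
    have hclosed : IsClosed (Set.range T) := hanti.isClosed_range T.uniformContinuous
    have : ((⨆ j, X_ j : Submodule ℝ X) : Set X) = Set.range T := by
      rw [← hrange]; rfl
    rw [this]; exact hclosed
  · -- Part (2)
    rintro ⟨hindep, hclosed⟩
    haveI : CompleteSpace (⨆ j, X_ j : Submodule ℝ X) := hclosed.completeSpace_coe
    set S : Submodule ℝ X := ⨆ j, X_ j with hSdef
    have hmem : ∀ v : ∀ j, X_ j, T v ∈ S := by
      intro v; rw [← hrange]; exact ⟨v, rfl⟩
    set T' : (∀ j, X_ j) →L[ℝ] S := T.codRestrict S hmem with hT'def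
    have hinj : Function.Injective T' := by
      intro v w hvw
      have h0 : T (v - w) = 0 := by
        have : T v = T w := congrArg Subtype.val hvw
        simp [map_sub, this]
      rw [hT] at h0
      have := hindep (fun j => ((v - w) j : X)) (fun j => ((v - w) j).2) (by simpa using h0)
      funext j
      have hj := this j
      have : (v - w) j = 0 := Subtype.ext hj
      have : v j - w j = 0 := this
      exact sub_eq_zero.mp this
    have hsurj : Function.Surjective T' := by
      rintro ⟨x, hx⟩
      have hx2 : x ∈ LinearMap.range (T : (∀ j, X_ j) →ₗ[ℝ] X) := by rw [hrange]; exact hx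
      obtain ⟨v, hv⟩ := hx2
      exact ⟨v, Subtype.ext hv⟩
    have hbij : Function.Bijective T' := ⟨hinj, hsurj⟩
    set e := ContinuousLinearEquiv.ofBijective T'
      (LinearMap.ker_eq_bot_of_injective hinj)
      (LinearMap.range_eq_top.mpr hsurj) with hedef
    obtain ⟨c, hc⟩ : ∃ c : ℝ≥0, AntilipschitzWith c T' := ⟨_, e.antilipschitz⟩
    have hbound : ∀ v : ∀ j, X_ j, ‖v‖ ≤ c * ‖T v‖ := by
      intro v
      have := hc.le_mul_dist v 0
      simpa [dist_eq_norm, hT'def] using this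
    refine ⟨1 / ((n + 1) * (c + 1)), by positivity, ?_⟩
    intro x hx
    set v : ∀ j, X_ j := fun j => ⟨x j, hx j⟩ with hvdef
    have hTv : T v = ∑ j, x j := by rw [hT]
    have hsumnorm : ∑ j, ‖x j‖ ≤ (n + 1) * ‖v‖ := by
      calc ∑ j, ‖x j‖ = ∑ j : Fin (n+1), ‖v j‖ := rfl
        _ ≤ ∑ j : Fin (n+1), ‖v‖ := Finset.sum_le_sum fun j _ => norm_le_pi_norm v j
        _ = (n + 1) * ‖v‖ := by simp [mul_comm]
    have hvb : ‖v‖ ≤ (c + 1) * ‖T v‖ := by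
      have := hbound v
      have hc1 : (c : ℝ) ≤ (c : ℝ) + 1 := by linarith
      nlinarith [norm_nonneg (T v), this]
    rw [← hTv]
    rw [div_mul_eq_mul_div, one_mul, div_le_iff₀ (by positivity : (0:ℝ) < (n + 1) * (c + 1))]
    calc ∑ j, ‖x j‖ ≤ (n + 1) * ‖v‖ := hsumnorm
      _ ≤ (n + 1) * ((c + 1) * ‖T v‖) := by
          have hn : (0:ℝ) ≤ n + 1 := by positivity
          nlinarith [hvb]
      _ = ‖T v‖ * ((n + 1) * (c + 1)) := by ring
end

section
/- Let X be a Banach space and X₁, …, Xₙ linearly independent closed subspaces of X such that X₁ + … + Xₙ is closed in X. Then for every subset S of indices {1, …, n}, the sum Σ_{i ∈ S} X_i is closed in X. -/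
/-- If `X₁, …, Xₙ` are linearly independent closed subspaces of a Banach space with closed
sum, then the sum over every subset of indices is closed. -/
theorem stmt12 {X : Type*} [NormedAddCommGroup X] [NormedSpace ℝ X] [CompleteSpace X]
    {n : ℕ} (X_ : Fin n → Submodule ℝ X) (hcl : ∀ j, IsClosed ((X_ j : Set X)))
    (hind : ∀ x : Fin n → X, (∀ j, x j ∈ X_ j) → ∑ j, x j = 0 → ∀ j, x j = 0)
    (hsum : IsClosed ((⨆ j, X_ j : Submodule ℝ X) : Set X)) :
    ∀ S : Finset (Fin n), IsClosed ((⨆ i ∈ S, X_ i : Submodule ℝ X) : Set X) := by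
  classical
  intro S
  set Y : Submodule ℝ X := ⨆ j, X_ j with hY
  haveI : CompleteSpace Y := hsum.completeSpace_coe
  haveI : ∀ j, CompleteSpace (X_ j) := fun j => (hcl j).completeSpace_coe
  -- the sum map as a linear map into X
  let φ₀ : (∀ j, X_ j) →ₗ[ℝ] X :=
    { toFun := fun x => ∑ j, (x j : X)
      map_add' := by intro a b; simp [Finset.sum_add_distrib]
      map_smul' := by intro c a; simp [Finset.smul_sum] }
  have hmem : ∀ x : ∀ j, X_ j, φ₀ x ∈ Y := by
    intro x
    show ∑ j, (x j : X) ∈ Y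
    exact Submodule.sum_mem _ fun j _ => Submodule.mem_iSup_of_mem j (x j).2
  have hφ₀cont : Continuous fun x : ∀ j, X_ j => ∑ j, (x j : X) := by
    apply continuous_finset_sum
    intro j _
    exact continuous_subtype_val.comp (continuous_apply j)
  let φ : (∀ j, X_ j) →L[ℝ] Y :=
    ⟨φ₀.codRestrict Y hmem, by
      apply Continuous.subtype_mk
      exact hφ₀cont⟩
  have hφ_apply : ∀ x : ∀ j, X_ j, ((φ x : Y) : X) = ∑ j, (x j : X) := fun x => rfl
  have hker : LinearMap.ker (φ : (∀ j, X_ j) →ₗ[ℝ] Y) = ⊥ := by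
    rw [LinearMap.ker_eq_bot']
    intro x hx
    have hx' : ∑ j, (x j : X) = 0 := by
      have := congrArg (Subtype.val) hx
      simpa [hφ_apply] using this
    have := hind (fun j => (x j : X)) (fun j => (x j).2) hx'
    funext j
    exact Subtype.ext (this j)
  have hrange : LinearMap.range (φ : (∀ j, X_ j) →ₗ[ℝ] Y) = ⊤ := by
    rw [LinearMap.range_eq_top]
    intro y
    have hy : (y : X) ∈ ⨆ i ∈ (Finset.univ : Finset (Fin n)), X_ i := by
      simp [hY]
    obtain ⟨μ, hμ⟩ := (Submodule.mem_iSup_finset_iff_exists_sum _ _).mp hy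
    exact ⟨μ, Subtype.ext (by simp [hφ_apply, hμ])⟩
  let e := ContinuousLinearEquiv.ofBijective φ hker hrange
  have he_apply : ∀ x : ∀ j, X_ j, ((e x : Y) : X) = ∑ j, (x j : X) := fun x => rfl
  -- the closed set of families supported in S
  let K : Set (∀ j, X_ j) := {x | ∀ j ∉ S, x j = 0}
  have hK : IsClosed K := by
    have : K = ⋂ j ∈ {j | j ∉ S}, (fun x : ∀ j, X_ j => x j) ⁻¹' {0} := by
      ext x; simp [K, Set.mem_iInter]
    rw [this]
    exact isClosed_biInter fun j _ => isClosed_singleton.preimage (continuous_apply j)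
  have himg : IsClosed (e '' K) := e.toHomeomorph.isClosedMap _ hK
  have himg' : IsClosed (Subtype.val '' (e '' K)) :=
    hsum.isClosedEmbedding_subtypeVal.isClosedMap _ himg
  have hset : ((⨆ i ∈ S, X_ i : Submodule ℝ X) : Set X) = Subtype.val '' (e '' K) := by
    ext y
    constructor
    · intro hy
      obtain ⟨μ, hμ⟩ := (Submodule.mem_iSup_finset_iff_exists_sum _ _).mp hy
      refine ⟨e (fun j => if j ∈ S then μ j else 0), ⟨_, fun j hj => by simp [hj], rfl⟩, ?_⟩
      rw [he_apply]
      rw [← hμ]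
      rw [← Finset.sum_subset (Finset.subset_univ S)]
      · exact Finset.sum_congr rfl fun j hj => by simp [hj]
      · intro j _ hj; simp [hj]
    · rintro ⟨-, ⟨x, hx, rfl⟩, rfl⟩
      rw [he_apply]
      rw [← Finset.sum_subset (Finset.subset_univ S) (fun j _ hj => by simp [hx j hj])]
      exact Submodule.sum_mem _ fun i hi =>
        Submodule.mem_iSup_of_mem i (Submodule.mem_iSup_of_mem hi (x i).2)
  rw [hset]
  exact himg'
end

section
/- Let X be a Banach space and X₁, …, Xₙ linearly independent closed subspaces of X such that X₁ + … + Xₙ is closed in X. If Y_k is a closed subspace of X with Y_k ⊆ X_k for each 1 ≤ k ≤ n, then Y₁ + … + Yₙ is closed in X. -/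
/-- If `X₁, …, Xₙ` are linearly independent closed subspaces of a Banach space with closed
sum and `Y_k ⊆ X_k` are closed subspaces, then `Y₁ + … + Yₙ` is closed. -/
theorem stmt13 {X : Type*} [NormedAddCommGroup X] [NormedSpace ℝ X] [CompleteSpace X]
    {n : ℕ} (X_ Y_ : Fin n → Submodule ℝ X)
    (hXcl : ∀ j, IsClosed ((X_ j : Set X)))
    (hind : ∀ x : Fin n → X, (∀ j, x j ∈ X_ j) → ∑ j, x j = 0 → ∀ j, x j = 0)
    (hsum : IsClosed ((⨆ j, X_ j : Submodule ℝ X) : Set X))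
    (hYcl : ∀ k, IsClosed ((Y_ k : Set X))) (hYle : ∀ k, Y_ k ≤ X_ k) :
    IsClosed ((⨆ k, Y_ k : Submodule ℝ X) : Set X) := by
  classical
  -- membership in a finite supremum
  have memS : ∀ (p : Fin n → Submodule ℝ X) (a : X),
      a ∈ (⨆ j, p j) ↔ ∃ μ : ∀ j, p j, ∑ j, (μ j : X) = a := by
    intro p a
    have : (⨆ j, p j) = ⨆ j ∈ Finset.univ, p j := by simp
    rw [this]
    exact Submodule.mem_iSup_finset_iff_exists_sum p a
  haveI : ∀ j, CompleteSpace (X_ j) := fun j => (hXcl j).completeSpace_coe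
  set S : Submodule ℝ X := ⨆ j, X_ j with hS
  haveI : CompleteSpace S := hsum.completeSpace_coe
  -- the sum map
  let T : (∀ j, X_ j) →L[ℝ] X := ∑ j, (X_ j).subtypeL.comp (ContinuousLinearMap.proj j)
  have hT : ∀ x : ∀ j, X_ j, T x = ∑ j, (x j : X) := by
    intro x
    simp [T, ContinuousLinearMap.sum_apply]
  have hTmem : ∀ x : ∀ j, X_ j, T x ∈ S := by
    intro x
    rw [hT]
    exact (memS X_ _).2 ⟨x, rfl⟩
  let T' : (∀ j, X_ j) →L[ℝ] S := T.codRestrict S hTmem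
  have hker : LinearMap.ker (T' : (∀ j, X_ j) →ₗ[ℝ] S) = ⊥ := by
    rw [LinearMap.ker_eq_bot']
    intro x hx
    have hx0 : ∑ j, (x j : X) = 0 := by
      have := congrArg (Subtype.val) hx
      rwa [ContinuousLinearMap.coe_coe, ContinuousLinearMap.coe_codRestrict_apply, hT] at this
    have h0 := hind (fun j => (x j : X)) (fun j => (x j).2) hx0
    funext j
    exact Subtype.ext (h0 j)
  have hrange : LinearMap.range (T' : (∀ j, X_ j) →ₗ[ℝ] S) = ⊤ := by
    rw [LinearMap.range_eq_top]
    rintro ⟨a, ha⟩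
    obtain ⟨μ, hμ⟩ := (memS X_ a).1 ha
    exact ⟨μ, Subtype.ext (by rw [ContinuousLinearMap.coe_coe, ContinuousLinearMap.coe_codRestrict_apply, hT, hμ])⟩
  let e : (∀ j, X_ j) ≃L[ℝ] S := ContinuousLinearEquiv.ofBijective T' hker hrange
  -- the closed set of tuples with coordinates in Y_j
  set K : Set (∀ j, X_ j) := {x | ∀ j, (x j : X) ∈ Y_ j} with hK
  have hKcl : IsClosed K := by
    have : K = ⋂ j, (fun x : ∀ j, X_ j => (x j : X)) ⁻¹' (Y_ j : Set X) := by
      ext x; simp [hK]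
    rw [this]
    exact isClosed_iInter fun j =>
      (hYcl j).preimage (continuous_subtype_val.comp (continuous_apply j))
  have himg : IsClosed ((e '' K : Set S)) := by
    rw [ContinuousLinearEquiv.image_eq_preimage_symm]
    exact hKcl.preimage e.symm.continuous
  have hval : IsClosed (Subtype.val '' (e '' K) : Set X) :=
    hsum.isClosedEmbedding_subtypeVal.isClosedMap _ himg
  have hset : ((⨆ k, Y_ k : Submodule ℝ X) : Set X) = Subtype.val '' (e '' K) := by
    ext a
    constructor
    · intro ha
      obtain ⟨μ, hμ⟩ := (memS Y_ a).1 ha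
      refine ⟨e (fun j => ⟨μ j, hYle j (μ j).2⟩), ⟨_, fun j => (μ j).2, rfl⟩, ?_⟩
      show (T' _ : X) = a
      rw [ContinuousLinearMap.coe_codRestrict_apply, hT]
      exact hμ
    · rintro ⟨s, ⟨x, hx, rfl⟩, rfl⟩
      have : (e x : X) = ∑ j, (x j : X) := by
        show (T' x : X) = _
        rw [ContinuousLinearMap.coe_codRestrict_apply, hT]
      rw [this]
      exact (memS Y_ _).2 ⟨fun j => ⟨x j, hx j⟩, rfl⟩
  rw [hset]
  exact hval
end

section
/- Let H be a complex Hilbert space and H₁, …, Hₙ closed subspaces of H. Then there exist two closed subspaces M₁, M₂ of H such that H₁ + H₂ + … + Hₙ = M₁ + M₂ (equality of linear subspaces of H, where the sums need not be closed). -/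
open scoped ComplexInnerProductSpace

noncomputable section

private lemma fd_of_finite_hilbertBasis' {E : Type*} [NormedAddCommGroup E]
    [InnerProductSpace ℂ E] {ι : Type*} [Finite ι] (b : HilbertBasis ι ℂ E) :
    FiniteDimensional ℂ E := by
  haveI h1 : FiniteDimensional ℂ (Submodule.span ℂ (Set.range ⇑b)) :=
    FiniteDimensional.span_of_finite ℂ (Set.finite_range ⇑b)
  have hc : IsClosed ((Submodule.span ℂ (Set.range ⇑b) : Submodule ℂ E) : Set E) :=
    Submodule.closed_of_finiteDimensional _
  have h2 : (Submodule.span ℂ (Set.range ⇑b)).topologicalClosure = ⊤ := b.dense_span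
  have h3 : Submodule.span ℂ (Set.range ⇑b) = ⊤ := by
    rw [← h2]
    exact le_antisymm (Submodule.le_topologicalClosure _)
      (Submodule.topologicalClosure_minimal _ le_rfl hc)
  exact Module.Finite.equiv ((LinearEquiv.ofEq _ _ h3).trans (Submodule.topEquiv))

private lemma aux_iso {E : Type*} [NormedAddCommGroup E] [InnerProductSpace ℂ E] [CompleteSpace E]
    {A : Type*} [NormedAddCommGroup A] [InnerProductSpace ℂ A]
    {ι : Type*} (bA : HilbertBasis ι ℂ A) {v : ι → E} (hv : Orthonormal ℂ v) :
    ∃ gi : A →ₗᵢ[ℂ] E,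
      ∀ x, gi x ∈ (Submodule.span ℂ (Set.range v)).topologicalClosure := by
  refine ⟨(hv.orthogonalFamily.linearIsometry).comp bA.repr.toLinearIsometry, fun x => ?_⟩
  have hsum := hv.orthogonalFamily.hasSum_linearIsometry (bA.repr x)
  have hmem : ∀ t : Finset ι,
      (∑ k ∈ t, LinearIsometry.toSpanSingleton ℂ E (hv.1 k) (bA.repr x k))
        ∈ Submodule.span ℂ (Set.range v) := by
    intro t
    refine Submodule.sum_mem _ fun k _ => ?_
    rw [LinearIsometry.toSpanSingleton_apply]
    exact Submodule.smul_mem _ _ (Submodule.subset_span ⟨k, rfl⟩)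
  have : ((hv.orthogonalFamily.linearIsometry).comp bA.repr.toLinearIsometry) x
      ∈ closure ((Submodule.span ℂ (Set.range v) : Submodule ℂ E) : Set E) :=
    mem_closure_of_tendsto hsum (Filter.Eventually.of_forall hmem)
  exact this

private lemma norm_sub_proj_le' {E : Type*} [NormedAddCommGroup E] [InnerProductSpace ℂ E]
    (K : Submodule ℂ E) [K.HasOrthogonalProjection] (x : E) :
    ‖x - (K.orthogonalProjectionOnto x : E)‖ ≤ ‖x‖ := by
  have hmem : x - (K.orthogonalProjectionOnto x : E) ∈ Kᗮ :=
    Submodule.sub_starProjection_mem_orthogonal x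
  have hinner : ⟪x - (K.orthogonalProjectionOnto x : E), (K.orthogonalProjectionOnto x : E)⟫ = 0 :=
    Submodule.inner_left_of_mem_orthogonal (Submodule.coe_mem _) hmem
  have hsum := norm_add_sq_eq_norm_sq_add_norm_sq_of_inner_eq_zero _ _ hinner
  rw [sub_add_cancel] at hsum
  nlinarith [norm_nonneg (x - (K.orthogonalProjectionOnto x : E)),
      norm_nonneg ((K.orthogonalProjectionOnto x : E)), norm_nonneg x,
      sq_nonneg (‖(K.orthogonalProjectionOnto x : E)‖)]

private lemma key {E : Type*} [NormedAddCommGroup E] [InnerProductSpace ℂ E] [CompleteSpace E]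
    {n : ℕ} (H_ : Fin n → Submodule ℂ E) (hcl : ∀ i, IsClosed ((H_ i : Set E))) (j : Fin n)
    (g : ∀ i : {i : Fin n // i ≠ j}, (H_ i.1 : Type _) →ₗᵢ[ℂ] E)
    (hgmem : ∀ i x, g i x ∈ H_ j)
    (hortho : OrthogonalFamily ℂ (fun i : {i : Fin n // i ≠ j} => H_ i.1) g) :
    ∃ M₁ M₂ : Submodule ℂ E, IsClosed ((M₁ : Set E)) ∧ IsClosed ((M₂ : Set E)) ∧
      (⨆ i, H_ i) = M₁ ⊔ M₂ := by
  classical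
  haveI : ∀ i : Fin n, CompleteSpace (H_ i) := fun i => (hcl i).completeSpace_coe
  set I := {i : Fin n // i ≠ j} with hI
  let W : Type _ := PiLp 2 (fun i : I => H_ i.1)
  let G : W →ₗ[ℂ] E := ∑ i : I, (g i).toLinearMap ∘ₗ (PiLp.projₗ 2 (fun i : I => H_ i.1) i)
  let T : W →ₗ[ℂ] E := ∑ i : I, (H_ i.1).subtype ∘ₗ (PiLp.projₗ 2 (fun i : I => H_ i.1) i)
  let P : E →L[ℂ] E := (H_ j).subtypeL.comp ((H_ j).orthogonalProjectionOnto)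
  let Φ : W →ₗ[ℂ] E := G + (T - P.toLinearMap ∘ₗ T)
  have hP_apply : ∀ x : E, P x = ((H_ j).orthogonalProjectionOnto x : E) := fun x => rfl
  have hPmem : ∀ x : E, P x ∈ H_ j := fun x => ((H_ j).orthogonalProjectionOnto x).2
  have hG_apply : ∀ w : W, G w = ∑ i : I, (g i (w i) : E) := by
    intro w; rw [show G = ∑ i : I, (g i).toLinearMap ∘ₗ (PiLp.projₗ 2 (fun i : I => H_ i.1) i) from rfl, LinearMap.sum_apply]; rfl
  have hT_apply : ∀ w : W, T w = ∑ i : I, ((w i : E)) := by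
    intro w; rw [show T = ∑ i : I, (H_ i.1).subtype ∘ₗ (PiLp.projₗ 2 (fun i : I => H_ i.1) i) from rfl, LinearMap.sum_apply]; rfl
  have hΦ_apply : ∀ w : W, Φ w = G w + (T w - P (T w)) := by
    intro w; simp [Φ]
  have hGmem : ∀ w : W, G w ∈ H_ j := by
    intro w; rw [hG_apply]; exact Submodule.sum_mem _ fun i _ => hgmem i (w i)
  have hQmem : ∀ w : W, T w - P (T w) ∈ (H_ j)ᗮ := by
    intro w; rw [hP_apply]; exact Submodule.sub_starProjection_mem_orthogonal _
  have hGnorm : ∀ w : W, ‖G w‖ = ‖w‖ := by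
    intro w
    have h1 : ‖∑ i : I, (g i (w i) : E)‖ ^ 2 = ∑ i : I, ‖w i‖ ^ 2 :=
      hortho.norm_sum (fun i => w i) Finset.univ
    have h2 : ‖w‖ ^ 2 = ∑ i : I, ‖w i‖ ^ 2 := PiLp.norm_sq_eq_of_L2 _ w
    have h3 : ‖G w‖ ^ 2 = ‖w‖ ^ 2 := by rw [hG_apply, h1, h2]
    have h4 := congrArg Real.sqrt h3
    rwa [Real.sqrt_sq (norm_nonneg _), Real.sqrt_sq (norm_nonneg _)] at h4
  have hlower : ∀ w : W, ‖w‖ ≤ ‖Φ w‖ := by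
    intro w
    have hinner : ⟪G w, T w - P (T w)⟫ = 0 :=
      Submodule.inner_right_of_mem_orthogonal (hGmem w) (hQmem w)
    have hsq := norm_add_sq_eq_norm_sq_add_norm_sq_of_inner_eq_zero _ _ hinner
    rw [← hΦ_apply, hGnorm w] at hsq
    nlinarith [norm_nonneg w, norm_nonneg (Φ w), mul_self_nonneg (‖T w - P (T w)‖)]
  have hcoord : ∀ (w : W) (i : I), ‖w i‖ ≤ ‖w‖ := by
    intro w i
    have h2 : ‖w‖ ^ 2 = ∑ i : I, ‖w i‖ ^ 2 := PiLp.norm_sq_eq_of_L2 _ w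
    have h1 : ‖w i‖ ^ 2 ≤ ‖w‖ ^ 2 := by
      rw [h2]
      exact Finset.single_le_sum (fun i _ => sq_nonneg ‖w i‖) (Finset.mem_univ i)
    nlinarith [norm_nonneg w, norm_nonneg (w i)]
  have hTnorm : ∀ w : W, ‖T w‖ ≤ (n : ℝ) * ‖w‖ := by
    intro w
    rw [hT_apply]
    calc ‖∑ i : I, ((w i : E))‖ ≤ ∑ i : I, ‖(w i : E)‖ := norm_sum_le _ _
      _ ≤ ∑ _i : I, ‖w‖ := Finset.sum_le_sum fun i _ => hcoord w i
      _ = (Fintype.card I : ℝ) * ‖w‖ := by simp [Finset.sum_const, nsmul_eq_mul]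
      _ ≤ (n : ℝ) * ‖w‖ := by
          have : Fintype.card I ≤ Fintype.card (Fin n) :=
            Fintype.card_subtype_le _
          rw [Fintype.card_fin] at this
          exact mul_le_mul_of_nonneg_right (by exact_mod_cast this) (norm_nonneg w)
  have hupper : ∀ w : W, ‖Φ w‖ ≤ (1 + (n : ℝ)) * ‖w‖ := by
    intro w
    rw [hΦ_apply]
    calc ‖G w + (T w - P (T w))‖ ≤ ‖G w‖ + ‖T w - P (T w)‖ := norm_add_le _ _
      _ ≤ ‖w‖ + ‖T w‖ := by
          gcongr
          · exact le_of_eq (hGnorm w)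
          · rw [hP_apply]; exact norm_sub_proj_le' _ _
      _ ≤ ‖w‖ + (n : ℝ) * ‖w‖ := by gcongr; exact hTnorm w
      _ = (1 + (n : ℝ)) * ‖w‖ := by ring
  haveI hWc : CompleteSpace W := by
    have A : IsUniformInducing (WithLp.equiv 2 (∀ i : I, (H_ i.1 : Type _))) :=
      (PiLp.antilipschitzWith_ofLp 2 _).isUniformInducing
        (PiLp.lipschitzWith_ofLp 2 _).uniformContinuous
    exact (A.completeSpace_congr (WithLp.equiv 2 _).surjective).mpr inferInstance
  let Φc : W →L[ℂ] E := Φ.mkContinuous (1 + (n : ℝ)) hupper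
  have hΦc : ∀ w, Φc w = Φ w := fun w => rfl
  have hanti : AntilipschitzWith 1 Φc := by
    apply Φc.antilipschitz_of_bound
    intro x
    simpa [hΦc] using hlower x
  have hM₂closed : IsClosed ((LinearMap.range Φ : Submodule ℂ E) : Set E) := by
    have h := hanti.isClosed_range Φc.uniformContinuous
    have : Set.range ⇑Φc = ((LinearMap.range Φ : Submodule ℂ E) : Set E) := by
      rw [LinearMap.coe_range]; rfl
    rwa [this] at h
  refine ⟨H_ j, LinearMap.range Φ, hcl j, hM₂closed, le_antisymm ?_ ?_⟩
  · apply iSup_le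
    intro i
    by_cases hij : i = j
    · subst hij; exact le_sup_left
    · intro x hx
      let ii : I := ⟨i, hij⟩
      let ξ : (H_ i : Type _) := ⟨x, hx⟩
      let w : W := (WithLp.equiv 2 (∀ i : I, (H_ i.1 : Type _))).symm (Pi.single ii ξ)
      have hws : w ii = ξ := by
        rw [show w = (WithLp.equiv 2 (∀ i : I, (H_ i.1 : Type _))).symm (Pi.single ii ξ) from rfl,
          WithLp.equiv_symm_apply, PiLp.toLp_apply, Pi.single_eq_same]
      have hwo : ∀ i' : I, i' ≠ ii → w i' = 0 := by
        intro i' h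
        rw [show w = (WithLp.equiv 2 (∀ i : I, (H_ i.1 : Type _))).symm (Pi.single ii ξ) from rfl,
          WithLp.equiv_symm_apply, PiLp.toLp_apply, Pi.single_eq_of_ne h]
      have hGw : G w = (g ii ξ : E) := by
        rw [hG_apply]
        rw [Finset.sum_eq_single ii]
        · rw [hws]
        · intro i' _ hne
          rw [hwo i' hne, map_zero]
        · intro h; exact absurd (Finset.mem_univ ii) h
      have hTw : T w = x := by
        rw [hT_apply]
        rw [Finset.sum_eq_single ii]
        · rw [hws]
        · intro i' _ hne
          rw [hwo i' hne]; simp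
        · intro h; exact absurd (Finset.mem_univ ii) h
      have hx' : x = (P x - (g ii ξ : E)) + Φ w := by
        rw [hΦ_apply, hGw, hTw]; abel
      rw [hx']
      apply Submodule.add_mem_sup
      · exact Submodule.sub_mem _ (hPmem x) (hgmem ii ξ)
      · exact ⟨w, rfl⟩
  · apply sup_le
    · exact le_iSup H_ j
    · rintro x ⟨w, rfl⟩
      have h1 : G w ∈ ⨆ i, H_ i := le_iSup H_ j (hGmem w)
      have h2 : T w ∈ ⨆ i, H_ i := by
        rw [hT_apply]
        exact Submodule.sum_mem _ fun i _ => le_iSup H_ i.1 (w i).2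
      have h3 : P (T w) ∈ ⨆ i, H_ i := le_iSup H_ j (hPmem (T w))
      rw [hΦ_apply]
      exact Submodule.add_mem _ h1 (Submodule.sub_mem _ h2 h3)


/-- The sum of `n` closed subspaces of a complex Hilbert space can be represented as the sum
of two closed subspaces: there are closed subspaces `M₁, M₂` with
`H₁ + … + Hₙ = M₁ + M₂` (as linear subspaces, not necessarily closed). -/
theorem stmt19 {H : Type*} [NormedAddCommGroup H] [InnerProductSpace ℂ H] [CompleteSpace H]
    {n : ℕ} (H_ : Fin n → Submodule ℂ H) (hcl : ∀ i, IsClosed ((H_ i : Set H))) :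
    ∃ M₁ M₂ : Submodule ℂ H, IsClosed ((M₁ : Set H)) ∧ IsClosed ((M₂ : Set H)) ∧
      (⨆ i, H_ i) = M₁ ⊔ M₂ := by
  classical
  haveI hcs : ∀ i : Fin n, CompleteSpace (H_ i) := fun i => (hcl i).completeSpace_coe
  choose s b hb using fun i : Fin n => exists_hilbertBasis ℂ (H_ i)
  by_cases hfd : ∀ i, Finite (s i)
  · haveI : ∀ i, FiniteDimensional ℂ (H_ i) := fun i =>
      haveI := hfd i
      fd_of_finite_hilbertBasis' (b i)
    haveI : FiniteDimensional ℂ ↥(⨆ i, H_ i) := inferInstance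
    exact ⟨⨆ i, H_ i, ⊥, Submodule.closed_of_finiteDimensional _,
      Submodule.closed_of_finiteDimensional _, (sup_bot_eq _).symm⟩
  · push_neg at hfd
    obtain ⟨i₀, hi₀⟩ := hfd
    haveI : Infinite (s i₀) := hi₀
    obtain ⟨j, -, hj⟩ := Finset.exists_max_image Finset.univ
      (fun i : Fin n => Cardinal.mk (s i)) ⟨i₀, Finset.mem_univ i₀⟩
    have hj' : ∀ i, Cardinal.mk (s i) ≤ Cardinal.mk (s j) := fun i => hj i (Finset.mem_univ i)
    have hinf : Cardinal.aleph0 ≤ Cardinal.mk (s j) :=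
      le_trans (Cardinal.infinite_iff.mp inferInstance) (hj' i₀)
    have e : ∀ i : {i : Fin n // i ≠ j}, (s i.1 : Type _) ↪ (s j : Type _) :=
      fun i => Classical.choice ((Cardinal.le_def _ _).mp (hj' i.1))
    have hcard : Cardinal.mk (Σ i : {i : Fin n // i ≠ j}, s i.1) ≤ Cardinal.mk (s j) := by
      have h0 : Cardinal.mk (Σ i : {i : Fin n // i ≠ j}, s i.1)
          ≤ Cardinal.mk ({i : Fin n // i ≠ j} × s j) := by
        refine Cardinal.mk_le_of_injective
          (f := fun k : (Σ i : {i : Fin n // i ≠ j}, s i.1) => (k.1, e k.1 k.2)) ?_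
        rintro ⟨i, k⟩ ⟨i', k'⟩ h
        have h1 : i = i' := congrArg Prod.fst h
        subst h1
        have h2 : e i k = e i k' := by
          simpa using congrArg Prod.snd h
        exact congrArg (Sigma.mk i) ((e i).injective h2)
      refine le_trans h0 ?_
      rw [Cardinal.mk_prod, Cardinal.lift_uzero]
      calc Cardinal.lift (Cardinal.mk {i : Fin n // i ≠ j}) * Cardinal.mk (s j)
          ≤ Cardinal.mk (s j) * Cardinal.mk (s j) := by
            refine mul_le_mul' ?_ le_rfl
            refine le_trans ?_ hinf
            rw [← Cardinal.lift_aleph0.{_, 0}]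
            exact Cardinal.lift_le.mpr Cardinal.mk_le_aleph0
        _ = Cardinal.mk (s j) := Cardinal.mul_eq_self hinf
    obtain ⟨F⟩ := Cardinal.le_def _ _ |>.mp hcard
    -- the orthonormal family in `H` indexed by the sigma type
    have hbo : Orthonormal ℂ ((H_ j).subtypeₗᵢ ∘ ⇑(b j)) :=
      ((b j).orthonormal).comp_linearIsometry (H_ j).subtypeₗᵢ
    have hu : Orthonormal ℂ (((H_ j).subtypeₗᵢ ∘ ⇑(b j)) ∘ (⇑F)) := hbo.comp (⇑F) F.injective
    set u : (Σ i : {i : Fin n // i ≠ j}, s i.1) → H := ((H_ j).subtypeₗᵢ ∘ ⇑(b j)) ∘ (⇑F) with hu_def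
    have humem : ∀ k, u k ∈ H_ j := fun k => ((b j) (F k)).2
    have hv : ∀ i : {i : Fin n // i ≠ j}, Orthonormal ℂ (u ∘ Sigma.mk i) :=
      fun i => hu.comp (Sigma.mk i) sigma_mk_injective
    have hgex : ∀ i : {i : Fin n // i ≠ j}, ∃ gi : (H_ i.1 : Type _) →ₗᵢ[ℂ] H,
        ∀ x, gi x ∈ (Submodule.span ℂ
          (Set.range (u ∘ Sigma.mk i))).topologicalClosure :=
      fun i => aux_iso (b i.1) (hv i)
    choose g hg using hgex
    have hspan_le : ∀ i : {i : Fin n // i ≠ j},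
        (Submodule.span ℂ (Set.range (u ∘ Sigma.mk i))).topologicalClosure ≤ H_ j := by
      intro i
      apply Submodule.topologicalClosure_minimal
      · rw [Submodule.span_le]
        rintro _ ⟨k, rfl⟩
        exact humem ⟨i, k⟩
      · exact hcl j
    have hgmem : ∀ i x, g i x ∈ H_ j := fun i x => hspan_le i (hg i x)
    have hortho : OrthogonalFamily ℂ (fun i : {i : Fin n // i ≠ j} => (H_ i.1 : Type _)) g := by
      intro i i' hne x y
      have h1 : Submodule.span ℂ (Set.range (u ∘ Sigma.mk i)) ⟂
          Submodule.span ℂ (Set.range (u ∘ Sigma.mk i')) := by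
        rw [Submodule.isOrtho_span]
        rintro _ ⟨k, rfl⟩ _ ⟨k', rfl⟩
        exact hu.2 (fun hcontra => hne (congrArg Sigma.fst hcontra))
      have h2 : (Submodule.span ℂ
            (Set.range (u ∘ Sigma.mk i))).topologicalClosure ⟂
          (Submodule.span ℂ
            (Set.range (u ∘ Sigma.mk i'))).topologicalClosure := by
        have ha : (Submodule.span ℂ
            (Set.range (u ∘ Sigma.mk i))).topologicalClosure ⟂
            Submodule.span ℂ (Set.range (u ∘ Sigma.mk i')) :=
          Submodule.topologicalClosure_minimal _ h1.le (Submodule.isClosed_orthogonal _)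
        have hb : (Submodule.span ℂ
            (Set.range (u ∘ Sigma.mk i'))).topologicalClosure ⟂
            (Submodule.span ℂ (Set.range (u ∘ Sigma.mk i))).topologicalClosure :=
          Submodule.topologicalClosure_minimal _ ha.symm.le (Submodule.isClosed_orthogonal _)
        exact hb.symm
      exact h2.inner_eq (hg i x) (hg i' y)
    exact key H_ hcl j g hgmem hortho

end
end
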